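/- arXiv:1405.0533 — 4 statements merged into one kernel-verified Lean document; each statement's English description precedes it below -/
import Mathlib

section
/- Let G be a cubic graph with at least 10 vertices that has a breaker, i.e., a cycle C of length at most 5 that meets (shares a vertex with) every cycle of length at most 5 in G. Then G has at least 14 vertices. -/
open SimpleGraph Finset

section BreakerAux

variable {V : Type*} [DecidableEq V] {G : SimpleGraph V}

private lemma breaker_cycle3 {a b c : V} (hab : G.Adj a b) (hbc : G.Adj b c) (hca : G.Adj c a) :
    ∃ w : G.Walk a a, w.IsCycle ∧ w.length ≤ 5 ∧ ∀ x ∈ w.support, x = a ∨ x = b ∨ x = c := by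
  refine ⟨Walk.cons hab (Walk.cons hbc (Walk.cons hca Walk.nil)), ?_, by simp,
    by (first | (intro x hx; simp at hx; tauto) | simp)⟩
  have h1 := hab.ne; have h2 := hbc.ne; have h3 := hca.ne
  simp [Walk.isCycle_def, Walk.isTrail_def, Sym2.eq, Sym2.rel_iff', Ne, not_or]
  aesop

private lemma breaker_cycle4 {a b c d : V} (hab : G.Adj a b) (hbc : G.Adj b c) (hcd : G.Adj c d)
    (hda : G.Adj d a) (hac : a ≠ c) (hbd : b ≠ d) :
    ∃ w : G.Walk a a, w.IsCycle ∧ w.length ≤ 5 ∧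
      ∀ x ∈ w.support, x = a ∨ x = b ∨ x = c ∨ x = d := by
  refine ⟨Walk.cons hab (Walk.cons hbc (Walk.cons hcd (Walk.cons hda Walk.nil))), ?_, by simp,
    by (first | (intro x hx; simp at hx; tauto) | simp)⟩
  have h1 := hab.ne; have h2 := hbc.ne; have h3 := hcd.ne; have h4 := hda.ne
  simp [Walk.isCycle_def, Walk.isTrail_def, Sym2.eq, Sym2.rel_iff', Ne, not_or]
  aesop

private lemma breaker_cycle5 {a b c d e : V} (hab : G.Adj a b) (hbc : G.Adj b c) (hcd : G.Adj c d)
    (hde : G.Adj d e) (hea : G.Adj e a) (hac : a ≠ c) (had : a ≠ d) (hbd : b ≠ d)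
    (hbe : b ≠ e) (hce : c ≠ e) :
    ∃ w : G.Walk a a, w.IsCycle ∧ w.length ≤ 5 ∧
      ∀ x ∈ w.support, x = a ∨ x = b ∨ x = c ∨ x = d ∨ x = e := by
  refine ⟨Walk.cons hab (Walk.cons hbc (Walk.cons hcd (Walk.cons hde (Walk.cons hea Walk.nil)))),
    ?_, by simp, by (first | (intro x hx; simp at hx; tauto) | simp)⟩
  have h1 := hab.ne; have h2 := hbc.ne; have h3 := hcd.ne; have h4 := hde.ne; have h5 := hea.ne
  simp [Walk.isCycle_def, Walk.isTrail_def, Sym2.eq, Sym2.rel_iff', Ne, not_or]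
  aesop

omit [DecidableEq V] in
private lemma breaker_two_nbrs_start {s : V} {w : G.Walk s s} (hw : w.IsCycle) :
    ∃ x y, x ≠ y ∧ G.Adj s x ∧ G.Adj s y ∧ x ∈ w.support ∧ y ∈ w.support := by
  have hlen3 := hw.three_le_length
  cases w with
  | nil => exact absurd rfl hw.ne_nil
  | cons hadj q =>
    rename_i v
    rw [Walk.cons_isCycle_iff] at hw
    have hq : q.IsPath := hw.1
    have hql : 2 ≤ q.length := by
      simp only [Walk.length_cons] at hlen3; omega
    have hlt : q.length - 1 < q.length := by omega
    have hadj2 : G.Adj (q.getVert (q.length - 1)) s := by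
      have h2 := q.adj_getVert_succ hlt
      rw [Nat.sub_add_cancel (by omega), q.getVert_length] at h2
      exact h2
    have hymem : q.getVert (q.length - 1) ∈ q.support :=
      Walk.mem_support_iff_exists_getVert.mpr ⟨q.length - 1, rfl, by omega⟩
    refine ⟨v, q.getVert (q.length - 1), ?_, hadj, hadj2.symm, ?_, ?_⟩
    · cases q with
      | nil => simp at hql
      | cons hadj3 q2 =>
        rename_i v2
        have hv : v ∉ q2.support := (Walk.cons_isPath_iff _ _ |>.mp hq).2
        have hq2 : 1 ≤ q2.length := by
          simp only [Walk.length_cons] at hql; omega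
        have hy : (Walk.cons hadj3 q2).getVert ((Walk.cons hadj3 q2).length - 1)
            = q2.getVert (q2.length - 1) := by
          simp only [Walk.length_cons]
          rw [show q2.length + 1 - 1 = (q2.length - 1) + 1 by omega, Walk.getVert_cons_succ]
        rw [hy]
        intro hcontra
        apply hv
        rw [hcontra]
        exact Walk.mem_support_iff_exists_getVert.mpr ⟨q2.length - 1, rfl, by omega⟩
    · simp
    · rw [Walk.support_cons]
      exact List.mem_cons_of_mem _ hymem

omit [DecidableEq V] in
private lemma breaker_two_nbrs {u s : V} {c : G.Walk u u} (hc : c.IsCycle) (hs : s ∈ c.support) :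
    ∃ x y, x ≠ y ∧ G.Adj s x ∧ G.Adj s y ∧ x ∈ c.support ∧ y ∈ c.support := by
  classical
  obtain ⟨x, y, hxy, hx, hy, hxs, hys⟩ := breaker_two_nbrs_start (hc.rotate hs)
  have hrot := Walk.support_rotate c s hs
  have hmem : ∀ z, z ∈ (c.rotate s hs).support → z ∈ c.support := by
    intro z hz
    rw [Walk.mem_support_iff] at hz
    rcases hz with rfl | hz
    · exact hs
    · rw [Walk.mem_support_iff]; right; exact hrot.mem_iff.mp hz
  exact ⟨x, y, hxy, hx, hy, hmem x hxs, hmem y hys⟩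

private lemma breaker_cycle_support_card {u : V} {c : G.Walk u u} (hc : c.IsCycle) :
    c.support.toFinset.card = c.length := by
  have hnd : c.support.tail.Nodup := hc.2
  cases c with
  | nil => exact absurd rfl hc.ne_nil
  | cons hadj q =>
    rw [Walk.support_cons] at hnd ⊢
    rw [List.toFinset_cons, List.tail_cons] at *
    rw [Finset.insert_eq_self.mpr (List.mem_toFinset.mpr q.end_mem_support)]
    rw [List.toFinset_card_of_nodup hnd, Walk.length_support, Walk.length_cons]

end BreakerAux

section BreakerCounting

variable {V : Type*} [Fintype V] [DecidableEq V] (G : SimpleGraph V) [DecidableRel G.Adj]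

/-- the set of neighbours of `x` inside `W` -/
def nbrW (W : Finset V) (x : V) : Finset V := G.neighborFinset x ∩ W

/-- degree within `W` -/
def degW (W : Finset V) (x : V) : ℕ := (nbrW G W x).card

/-- sum of the `W`-degrees of the `W`-neighbours -/
def fW (W : Finset V) (x : V) : ℕ := ∑ y ∈ nbrW G W x, degW G W y

variable {G}

lemma mem_nbrW {W : Finset V} {x y : V} : y ∈ nbrW G W x ↔ G.Adj x y ∧ y ∈ W := by
  simp [nbrW]

lemma nbrW_subset {W : Finset V} {x : V} : nbrW G W x ⊆ W := by
  intro y hy; exact (mem_nbrW.mp hy).2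

lemma card_nbrW {W : Finset V} {x : V} : (nbrW G W x).card = degW G W x := rfl

lemma nbrW_filter (W : Finset V) (x : V) :
    nbrW G W x = W.filter (fun y => G.Adj x y) := by
  ext y; simp [nbrW, and_comm]

lemma exchangeW (W : Finset V) (g : V → ℕ) :
    ∑ v ∈ W, ∑ u ∈ nbrW G W v, g u = ∑ u ∈ W, degW G W u * g u := by
  calc ∑ v ∈ W, ∑ u ∈ nbrW G W v, g u
      = ∑ v ∈ W, ∑ u ∈ W, if G.Adj v u then g u else 0 := by
        refine Finset.sum_congr rfl fun v _ => ?_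
        rw [nbrW_filter, Finset.sum_filter]
    _ = ∑ u ∈ W, ∑ v ∈ W, if G.Adj v u then g u else 0 := Finset.sum_comm
    _ = ∑ u ∈ W, degW G W u * g u := by
        refine Finset.sum_congr rfl fun u _ => ?_
        have h1 : W.filter (fun v => G.Adj v u) = nbrW G W u := by
          rw [nbrW_filter]
          exact Finset.filter_congr fun v _ => by rw [G.adj_comm]
        rw [← Finset.sum_filter, h1, Finset.sum_const, smul_eq_mul, card_nbrW]

lemma count_symW (A B : Finset V) :
    ∑ v ∈ A, (G.neighborFinset v ∩ B).card = ∑ s ∈ B, (G.neighborFinset s ∩ A).card := by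
  have h : ∀ (X : Finset V) (x : V), (G.neighborFinset x ∩ X).card
      = ∑ y ∈ X, if G.Adj x y then 1 else 0 := by
    intro X x
    have h2 : G.neighborFinset x ∩ X = X.filter (fun y => G.Adj x y) := by
      ext y; simp [and_comm]
    rw [h2, Finset.card_filter]
  calc ∑ v ∈ A, (G.neighborFinset v ∩ B).card
      = ∑ v ∈ A, ∑ s ∈ B, if G.Adj v s then 1 else 0 := Finset.sum_congr rfl fun v _ => h B v
    _ = ∑ s ∈ B, ∑ v ∈ A, if G.Adj v s then 1 else 0 := Finset.sum_comm
    _ = ∑ s ∈ B, ∑ v ∈ A, if G.Adj s v then 1 else 0 := by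
        refine Finset.sum_congr rfl fun s _ => Finset.sum_congr rfl fun v _ => by
          simp only [G.adj_comm v s]
    _ = ∑ s ∈ B, (G.neighborFinset s ∩ A).card := Finset.sum_congr rfl fun s _ => (h A s).symm

lemma vertexMooreW {W : Finset V}
    (noC3 : ∀ {a b c : V}, a ∈ W → b ∈ W → c ∈ W →
      G.Adj a b → G.Adj b c → G.Adj c a → False)
    (noC4 : ∀ {a b c d : V}, a ∈ W → b ∈ W → c ∈ W → d ∈ W →
      G.Adj a b → G.Adj b c → G.Adj c d → G.Adj d a → a ≠ c → b ≠ d → False)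
    {v : V} (hv : v ∈ W) :
    1 + fW G W v ≤ W.card := by
  classical
  set N := nbrW G W v with hN
  have hdisj : ∀ u1 ∈ N, ∀ u2 ∈ N, u1 ≠ u2 →
      Disjoint (insert u1 ((nbrW G W u1).erase v)) (insert u2 ((nbrW G W u2).erase v)) := by
    intro u1 h1 u2 h2 hne
    obtain ⟨ha1, hw1⟩ := mem_nbrW.mp h1
    obtain ⟨ha2, hw2⟩ := mem_nbrW.mp h2
    rw [Finset.disjoint_left]
    intro x hx hx'
    rcases Finset.mem_insert.mp hx with rfl | hx
    · rcases Finset.mem_insert.mp hx' with rfl | hx'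
      · exact hne rfl
      · have := Finset.mem_erase.mp hx'
        obtain ⟨hax, hwx⟩ := mem_nbrW.mp this.2
        exact noC3 hv hw2 hw1 ha2 hax ha1.symm
    · rcases Finset.mem_insert.mp hx' with rfl | hx'
      · have := Finset.mem_erase.mp hx
        obtain ⟨hax, hwx⟩ := mem_nbrW.mp this.2
        exact noC3 hv hw1 hw2 ha1 hax ha2.symm
      · obtain ⟨hxv, hx⟩ := Finset.mem_erase.mp hx
        obtain ⟨hxv', hx'⟩ := Finset.mem_erase.mp hx'
        obtain ⟨hax1, hwx⟩ := mem_nbrW.mp hx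
        obtain ⟨hax2, _⟩ := mem_nbrW.mp hx'
        exact noC4 hv hw1 hwx hw2 ha1 hax1 hax2.symm ha2.symm hxv.symm hne
  have hvnot : v ∉ N.biUnion (fun u => insert u ((nbrW G W u).erase v)) := by
    intro hvmem
    obtain ⟨u, hu, hmem⟩ := Finset.mem_biUnion.mp hvmem
    obtain ⟨hau, hwu⟩ := mem_nbrW.mp hu
    rcases Finset.mem_insert.mp hmem with rfl | hmem
    · exact G.irrefl hau
    · exact (Finset.mem_erase.mp hmem).1 rfl
  have hsub : insert v (N.biUnion (fun u => insert u ((nbrW G W u).erase v))) ⊆ W := by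
    intro x hx
    rcases Finset.mem_insert.mp hx with rfl | hx
    · exact hv
    · obtain ⟨u, hu, hmem⟩ := Finset.mem_biUnion.mp hx
      rcases Finset.mem_insert.mp hmem with rfl | hmem
      · exact (mem_nbrW.mp hu).2
      · exact nbrW_subset (Finset.mem_erase.mp hmem).2
  have hterm : ∀ u ∈ N, (insert u ((nbrW G W u).erase v)).card = degW G W u := by
    intro u hu
    obtain ⟨hau, hwu⟩ := mem_nbrW.mp hu
    have hunot : u ∉ (nbrW G W u).erase v := by
      intro h
      exact G.irrefl (mem_nbrW.mp (Finset.mem_erase.mp h).2).1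
    have hvin : v ∈ nbrW G W u := mem_nbrW.mpr ⟨hau.symm, hv⟩
    rw [Finset.card_insert_of_notMem hunot, Finset.card_erase_of_mem hvin]
    have : 1 ≤ (nbrW G W u).card := Finset.card_pos.mpr ⟨v, hvin⟩
    rw [card_nbrW] at this ⊢
    omega
  have hcard : (insert v (N.biUnion (fun u => insert u ((nbrW G W u).erase v)))).card
      = 1 + fW G W v := by
    rw [Finset.card_insert_of_notMem hvnot, Finset.card_biUnion hdisj,
      Finset.sum_congr rfl hterm]
    rw [Nat.add_comm]
    rfl
  calc 1 + fW G W v = _ := hcard.symm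
    _ ≤ W.card := Finset.card_le_card hsub

/-- edge-Moore bound -/
lemma edgeMooreW {W : Finset V}
    (noC3 : ∀ {a b c : V}, a ∈ W → b ∈ W → c ∈ W →
      G.Adj a b → G.Adj b c → G.Adj c a → False)
    (noC4 : ∀ {a b c d : V}, a ∈ W → b ∈ W → c ∈ W → d ∈ W →
      G.Adj a b → G.Adj b c → G.Adj c d → G.Adj d a → a ≠ c → b ≠ d → False)
    (noC5 : ∀ {a b c d e : V}, a ∈ W → b ∈ W → c ∈ W → d ∈ W → e ∈ W →
      G.Adj a b → G.Adj b c → G.Adj c d → G.Adj d e → G.Adj e a →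
      a ≠ c → a ≠ d → b ≠ d → b ≠ e → c ≠ e → False)
    {u v : V} (hu : u ∈ W) (hv : v ∈ W) (huv : G.Adj u v) :
    fW G W u + fW G W v + 2 ≤ W.card + degW G W u + degW G W v := by
  classical
  show (∑ a ∈ nbrW G W u, (nbrW G W a).card) + (∑ b ∈ nbrW G W v, (nbrW G W b).card) + 2
      ≤ W.card + (nbrW G W u).card + (nbrW G W v).card
  set A := (nbrW G W u).erase v with hA
  set C := (nbrW G W v).erase u with hC
  -- basic membership facts
  have hmemA : ∀ {a}, a ∈ A → G.Adj u a ∧ a ∈ W ∧ a ≠ v := by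
    intro a ha
    obtain ⟨h1, h2⟩ := Finset.mem_erase.mp ha
    exact ⟨(mem_nbrW.mp h2).1, (mem_nbrW.mp h2).2, h1⟩
  have hmemC : ∀ {b}, b ∈ C → G.Adj v b ∧ b ∈ W ∧ b ≠ u := by
    intro b hb
    obtain ⟨h1, h2⟩ := Finset.mem_erase.mp hb
    exact ⟨(mem_nbrW.mp h2).1, (mem_nbrW.mp h2).2, h1⟩
  -- the head set
  set head := insert u (insert v (A ∪ C)) with hhead
  set BU1 := A.biUnion (fun a => (nbrW G W a).erase u) with hBU1
  set BU2 := C.biUnion (fun b => (nbrW G W b).erase v) with hBU2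
  have hAC : Disjoint A C := by
    rw [Finset.disjoint_left]
    intro x hx hx'
    obtain ⟨hux, hxW, hxv⟩ := hmemA hx
    obtain ⟨hvx, _, hxu⟩ := hmemC hx'
    exact noC3 hu hv hxW huv hvx hux.symm
  -- membership in BU1 / BU2
  have hmemBU1 : ∀ {x}, x ∈ BU1 → ∃ a ∈ A, G.Adj a x ∧ x ∈ W ∧ x ≠ u := by
    intro x hx
    obtain ⟨a, ha, hmem⟩ := Finset.mem_biUnion.mp hx
    obtain ⟨h1, h2⟩ := Finset.mem_erase.mp hmem
    exact ⟨a, ha, (mem_nbrW.mp h2).1, (mem_nbrW.mp h2).2, h1⟩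
  have hmemBU2 : ∀ {x}, x ∈ BU2 → ∃ b ∈ C, G.Adj b x ∧ x ∈ W ∧ x ≠ v := by
    intro x hx
    obtain ⟨b, hb, hmem⟩ := Finset.mem_biUnion.mp hx
    obtain ⟨h1, h2⟩ := Finset.mem_erase.mp hmem
    exact ⟨b, hb, (mem_nbrW.mp h2).1, (mem_nbrW.mp h2).2, h1⟩
  -- x in BU1 cannot be v, nor in A, nor in C
  have hBU1v : ∀ {x}, x ∈ BU1 → x ≠ v := by
    intro x hx hxeq
    obtain ⟨a, ha, hax, hxW, hxu⟩ := hmemBU1 hx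
    obtain ⟨hua, haW, hav⟩ := hmemA ha
    exact noC3 hu haW hv hua (hxeq ▸ hax) huv.symm
  have hBU2u : ∀ {x}, x ∈ BU2 → x ≠ u := by
    intro x hx hxeq
    obtain ⟨b, hb, hbx, hxW, hxv⟩ := hmemBU2 hx
    obtain ⟨hvb, hbW, hbu⟩ := hmemC hb
    exact noC3 hv hbW hu hvb (hxeq ▸ hbx) huv
  have hBU1A : ∀ {x}, x ∈ BU1 → x ∉ A := by
    intro x hx hxA
    obtain ⟨a, ha, hax, hxW, hxu⟩ := hmemBU1 hx
    obtain ⟨hua, haW, hav⟩ := hmemA ha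
    obtain ⟨hux, _, hxv⟩ := hmemA hxA
    have hane : a ≠ x := hax.ne
    exact noC3 hu haW hxW hua hax hux.symm
  have hBU2C : ∀ {x}, x ∈ BU2 → x ∉ C := by
    intro x hx hxC
    obtain ⟨b, hb, hbx, hxW, hxv⟩ := hmemBU2 hx
    obtain ⟨hvb, hbW, hbu⟩ := hmemC hb
    obtain ⟨hvx, _, hxu⟩ := hmemC hxC
    exact noC3 hv hbW hxW hvb hbx hvx.symm
  have hBU1C : ∀ {x}, x ∈ BU1 → x ∉ C := by
    intro x hx hxC
    obtain ⟨a, ha, hax, hxW, hxu⟩ := hmemBU1 hx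
    obtain ⟨hua, haW, hav⟩ := hmemA ha
    obtain ⟨hvx, _, _⟩ := hmemC hxC
    -- C4 : u ~ a ~ x ~ v ~ u
    exact noC4 hu haW hxW hv hua hax hvx.symm huv.symm hxu.symm hav
  have hBU2A : ∀ {x}, x ∈ BU2 → x ∉ A := by
    intro x hx hxA
    obtain ⟨b, hb, hbx, hxW, hxv⟩ := hmemBU2 hx
    obtain ⟨hvb, hbW, hbu⟩ := hmemC hb
    obtain ⟨hux, _, _⟩ := hmemA hxA
    exact noC4 hv hbW hxW hu hvb hbx hux.symm huv hxv.symm hbu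
  -- disjointness of the big pieces
  have hdisj1 : Disjoint head BU1 := by
    rw [Finset.disjoint_left]
    intro x hx hx'
    rcases Finset.mem_insert.mp hx with rfl | hx
    · obtain ⟨a, ha, hax, hxW, hxu⟩ := hmemBU1 hx'
      exact hxu rfl
    rcases Finset.mem_insert.mp hx with rfl | hx
    · exact hBU1v hx' rfl
    rcases Finset.mem_union.mp hx with hx | hx
    · exact hBU1A hx' hx
    · exact hBU1C hx' hx
  have hdisj2 : Disjoint head BU2 := by
    rw [Finset.disjoint_left]
    intro x hx hx'
    rcases Finset.mem_insert.mp hx with rfl | hx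
    · exact hBU2u hx' rfl
    rcases Finset.mem_insert.mp hx with rfl | hx
    · obtain ⟨b, hb, hbx, hxW, hxv⟩ := hmemBU2 hx'
      exact hxv rfl
    rcases Finset.mem_union.mp hx with hx | hx
    · exact hBU2A hx' hx
    · exact hBU2C hx' hx
  have hdisj12 : Disjoint BU1 BU2 := by
    rw [Finset.disjoint_left]
    intro x hx hx'
    obtain ⟨a, ha, hax, hxW, hxu⟩ := hmemBU1 hx
    obtain ⟨b, hb, hbx, _, hxv⟩ := hmemBU2 hx'
    obtain ⟨hua, haW, hav⟩ := hmemA ha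
    obtain ⟨hvb, hbW, hbu⟩ := hmemC hb
    by_cases hab : a = b
    · subst hab
      exact noC3 hu hv haW huv hvb hua.symm
    · -- C5 : u ~ a ~ x ~ b ~ v ~ u
      exact noC5 hu haW hxW hbW hv hua hax hbx.symm hvb.symm huv.symm
        (Ne.symm hxu) (Ne.symm hbu) hab hav hxv
  -- pairwise disjointness inside biUnions
  have hpair1 : ∀ a1 ∈ A, ∀ a2 ∈ A, a1 ≠ a2 →
      Disjoint ((nbrW G W a1).erase u) ((nbrW G W a2).erase u) := by
    intro a1 h1 a2 h2 hne
    obtain ⟨hua1, ha1W, ha1v⟩ := hmemA h1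
    obtain ⟨hua2, ha2W, ha2v⟩ := hmemA h2
    rw [Finset.disjoint_left]
    intro x hx hx'
    obtain ⟨hxu, hx⟩ := Finset.mem_erase.mp hx
    obtain ⟨_, hx'⟩ := Finset.mem_erase.mp hx'
    obtain ⟨ha1x, hxW⟩ := mem_nbrW.mp hx
    obtain ⟨ha2x, _⟩ := mem_nbrW.mp hx'
    exact noC4 hu ha1W hxW ha2W hua1 ha1x ha2x.symm hua2.symm hxu.symm hne
  have hpair2 : ∀ b1 ∈ C, ∀ b2 ∈ C, b1 ≠ b2 →
      Disjoint ((nbrW G W b1).erase v) ((nbrW G W b2).erase v) := by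
    intro b1 h1 b2 h2 hne
    obtain ⟨hvb1, hb1W, hb1u⟩ := hmemC h1
    obtain ⟨hvb2, hb2W, hb2u⟩ := hmemC h2
    rw [Finset.disjoint_left]
    intro x hx hx'
    obtain ⟨hxv, hx⟩ := Finset.mem_erase.mp hx
    obtain ⟨_, hx'⟩ := Finset.mem_erase.mp hx'
    obtain ⟨hb1x, hxW⟩ := mem_nbrW.mp hx
    obtain ⟨hb2x, _⟩ := mem_nbrW.mp hx'
    exact noC4 hv hb1W hxW hb2W hvb1 hb1x hb2x.symm hvb2.symm hxv.symm hne
  -- cardinals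
  have hvA : v ∈ nbrW G W u := mem_nbrW.mpr ⟨huv, hv⟩
  have huC : u ∈ nbrW G W v := mem_nbrW.mpr ⟨huv.symm, hu⟩
  have hcardA : A.card + 1 = (nbrW G W u).card := Finset.card_erase_add_one hvA
  have hcardC : C.card + 1 = (nbrW G W v).card := Finset.card_erase_add_one huC
  have hheadcard : head.card = 2 + A.card + C.card := by
    have h1 : u ∉ insert v (A ∪ C) := by
      intro h
      rcases Finset.mem_insert.mp h with rfl | h
      · exact G.irrefl huv
      rcases Finset.mem_union.mp h with h | h
      · exact G.irrefl (hmemA h).1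
      · exact (hmemC h).2.2 rfl
    have h2 : v ∉ A ∪ C := by
      intro h
      rcases Finset.mem_union.mp h with h | h
      · exact (hmemA h).2.2 rfl
      · exact G.irrefl (hmemC h).1
    rw [hhead, Finset.card_insert_of_notMem h1, Finset.card_insert_of_notMem h2,
      Finset.card_union_of_disjoint hAC]
    omega
  have hBU1card : BU1.card + A.card = ∑ a ∈ A, (nbrW G W a).card := by
    rw [hBU1, Finset.card_biUnion hpair1]
    have : ∀ a ∈ A, ((nbrW G W a).erase u).card + 1 = (nbrW G W a).card := by
      intro a ha
      exact Finset.card_erase_add_one (mem_nbrW.mpr ⟨(hmemA ha).1.symm, hu⟩)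
    calc (∑ a ∈ A, ((nbrW G W a).erase u).card) + A.card
        = ∑ a ∈ A, (((nbrW G W a).erase u).card + 1) := by
          rw [Finset.sum_add_distrib, Finset.sum_const, smul_eq_mul, mul_one]
      _ = ∑ a ∈ A, (nbrW G W a).card := Finset.sum_congr rfl this
  have hBU2card : BU2.card + C.card = ∑ b ∈ C, (nbrW G W b).card := by
    rw [hBU2, Finset.card_biUnion hpair2]
    have : ∀ b ∈ C, ((nbrW G W b).erase v).card + 1 = (nbrW G W b).card := by
      intro b hb
      exact Finset.card_erase_add_one (mem_nbrW.mpr ⟨(hmemC hb).1.symm, hv⟩)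
    calc (∑ b ∈ C, ((nbrW G W b).erase v).card) + C.card
        = ∑ b ∈ C, (((nbrW G W b).erase v).card + 1) := by
          rw [Finset.sum_add_distrib, Finset.sum_const, smul_eq_mul, mul_one]
      _ = ∑ b ∈ C, (nbrW G W b).card := Finset.sum_congr rfl this
  have hsumA : (∑ a ∈ A, (nbrW G W a).card) + (nbrW G W v).card
      = ∑ a ∈ nbrW G W u, (nbrW G W a).card := Finset.sum_erase_add _ _ hvA
  have hsumC : (∑ b ∈ C, (nbrW G W b).card) + (nbrW G W u).card
      = ∑ b ∈ nbrW G W v, (nbrW G W b).card := Finset.sum_erase_add _ _ huC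
  -- total
  have hsub : head ∪ BU1 ∪ BU2 ⊆ W := by
    intro x hx
    rcases Finset.mem_union.mp hx with hx | hx
    · rcases Finset.mem_union.mp hx with hx | hx
      · rcases Finset.mem_insert.mp hx with rfl | hx
        · exact hu
        rcases Finset.mem_insert.mp hx with rfl | hx
        · exact hv
        rcases Finset.mem_union.mp hx with hx | hx
        · exact (hmemA hx).2.1
        · exact (hmemC hx).2.1
      · exact (hmemBU1 hx).choose_spec.2.2.1
    · exact (hmemBU2 hx).choose_spec.2.2.1
  have htotal : (head ∪ BU1 ∪ BU2).card = head.card + BU1.card + BU2.card := by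
    rw [Finset.card_union_of_disjoint, Finset.card_union_of_disjoint hdisj1]
    rw [Finset.disjoint_union_left]
    exact ⟨hdisj2, hdisj12⟩
  have hWcard := Finset.card_le_card hsub
  rw [htotal] at hWcard
  omega

/-- The master counting contradiction. -/
lemma mainBoundW {W : Finset V}
    (noC3 : ∀ {a b c : V}, a ∈ W → b ∈ W → c ∈ W →
      G.Adj a b → G.Adj b c → G.Adj c a → False)
    (noC4 : ∀ {a b c d : V}, a ∈ W → b ∈ W → c ∈ W → d ∈ W →
      G.Adj a b → G.Adj b c → G.Adj c d → G.Adj d a → a ≠ c → b ≠ d → False)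
    (noC5 : ∀ {a b c d e : V}, a ∈ W → b ∈ W → c ∈ W → d ∈ W → e ∈ W →
      G.Adj a b → G.Adj b c → G.Adj c d → G.Adj d e → G.Adj e a →
      a ≠ c → a ≠ d → b ≠ d → b ≠ e → c ≠ e → False)
    (hS1 : 3 * W.card ≤ (∑ v ∈ W, degW G W v) + 5)
    (hdle : ∀ v : V, degW G W v ≤ 3)
    (hp5 : 5 ≤ W.card) (hp9 : W.card ≤ 9) : False := by
  classical
  have hexd : ∑ v ∈ W, fW G W v = ∑ v ∈ W, degW G W v * degW G W v :=
    exchangeW W (degW G W)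
  have hexd0 : ∑ v ∈ W, ∑ u ∈ nbrW G W v, degW G W u
      = ∑ v ∈ W, degW G W v * degW G W v := exchangeW W (degW G W)
  have hexf : ∑ v ∈ W, ∑ u ∈ nbrW G W v, fW G W u
      = ∑ v ∈ W, degW G W v * fW G W v := exchangeW W (fW G W)
  -- summed edge-Moore
  have key : ∑ v ∈ W, ∑ u ∈ nbrW G W v, (fW G W v + fW G W u + 2)
      ≤ ∑ v ∈ W, ∑ u ∈ nbrW G W v, (W.card + degW G W v + degW G W u) := by
    refine Finset.sum_le_sum fun v hv => Finset.sum_le_sum fun u hu => ?_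
    obtain ⟨hadj, huW⟩ := mem_nbrW.mp hu
    exact edgeMooreW noC3 noC4 noC5 hv huW hadj
  have hL : ∑ v ∈ W, ∑ u ∈ nbrW G W v, (fW G W v + fW G W u + 2)
      = 2 * (∑ v ∈ W, degW G W v * fW G W v) + 2 * (∑ v ∈ W, degW G W v) := by
    have h1 : ∀ v ∈ W, ∑ u ∈ nbrW G W v, (fW G W v + fW G W u + 2)
        = (degW G W v * fW G W v + 2 * degW G W v) + ∑ u ∈ nbrW G W v, fW G W u := by
      intro v _
      rw [show (fun u => fW G W v + fW G W u + 2) = (fun u => (fW G W v + 2) + fW G W u) by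
        funext u; ring]
      rw [Finset.sum_add_distrib, Finset.sum_const, smul_eq_mul, card_nbrW]
      ring
    rw [Finset.sum_congr rfl h1, Finset.sum_add_distrib, hexf, Finset.sum_add_distrib,
      ← Finset.mul_sum]
    ring
  have hR : ∑ v ∈ W, ∑ u ∈ nbrW G W v, (W.card + degW G W v + degW G W u)
      = W.card * (∑ v ∈ W, degW G W v) + 2 * (∑ v ∈ W, degW G W v * degW G W v) := by
    have h1 : ∀ v ∈ W, ∑ u ∈ nbrW G W v, (W.card + degW G W v + degW G W u)
        = (W.card * degW G W v + degW G W v * degW G W v) + ∑ u ∈ nbrW G W v, degW G W u := by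
      intro v _
      rw [show (fun u => W.card + degW G W v + degW G W u)
        = (fun u => (W.card + degW G W v) + degW G W u) by funext u; ring]
      rw [Finset.sum_add_distrib, Finset.sum_const, smul_eq_mul, card_nbrW]
      ring
    rw [Finset.sum_congr rfl h1, Finset.sum_add_distrib, hexd0, Finset.sum_add_distrib,
      ← Finset.mul_sum]
    ring
  have hEMS : 2 * (∑ v ∈ W, degW G W v * fW G W v) + 2 * (∑ v ∈ W, degW G W v)
      ≤ W.card * (∑ v ∈ W, degW G W v) + 2 * (∑ v ∈ W, degW G W v * degW G W v) := by
    rw [← hL, ← hR]; exact key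
  -- lower bound for the product sum
  have hTexp : ∑ v ∈ W, degW G W v * fW G W v
      = ∑ v ∈ W, ∑ u ∈ nbrW G W v, degW G W v * degW G W u := by
    refine Finset.sum_congr rfl fun v _ => ?_
    rw [fW, Finset.mul_sum]
  have cube : ∀ a b : ℕ, a ≤ 3 → b ≤ 3 → 3 * a + 3 * b ≤ a * b + 9 := by
    intro a b ha hb
    interval_cases a <;> interval_cases b <;> omega
  have hTL : 6 * (∑ v ∈ W, degW G W v * degW G W v)
      ≤ (∑ v ∈ W, degW G W v * fW G W v) + 9 * (∑ v ∈ W, degW G W v) := by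
    have hkey2 : ∑ v ∈ W, ∑ u ∈ nbrW G W v, (3 * degW G W v + 3 * degW G W u)
        ≤ ∑ v ∈ W, ∑ u ∈ nbrW G W v, (degW G W v * degW G W u + 9) :=
      Finset.sum_le_sum fun v _ => Finset.sum_le_sum fun u _ =>
        cube (degW G W v) (degW G W u) (hdle v) (hdle u)
    have hL2 : ∑ v ∈ W, ∑ u ∈ nbrW G W v, (3 * degW G W v + 3 * degW G W u)
        = 6 * ∑ v ∈ W, degW G W v * degW G W v := by
      have h1 : ∀ v ∈ W, ∑ u ∈ nbrW G W v, (3 * degW G W v + 3 * degW G W u)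
          = 3 * (degW G W v * degW G W v) + 3 * fW G W v := by
        intro v _
        rw [Finset.sum_add_distrib, Finset.sum_const, smul_eq_mul, card_nbrW,
          fW, Finset.mul_sum]
        ring
      rw [Finset.sum_congr rfl h1, Finset.sum_add_distrib, ← Finset.mul_sum,
        ← Finset.mul_sum, hexd]
      ring
    have hR2 : ∑ v ∈ W, ∑ u ∈ nbrW G W v, (degW G W v * degW G W u + 9)
        = (∑ v ∈ W, degW G W v * fW G W v) + 9 * (∑ v ∈ W, degW G W v) := by
      have h1 : ∀ v ∈ W, ∑ u ∈ nbrW G W v, (degW G W v * degW G W u + 9)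
          = degW G W v * fW G W v + 9 * degW G W v := by
        intro v _
        rw [Finset.sum_add_distrib, Finset.sum_const, smul_eq_mul, card_nbrW,
          fW, Finset.mul_sum]
        ring
      rw [Finset.sum_congr rfl h1, Finset.sum_add_distrib, ← Finset.mul_sum]
    rw [← hL2, ← hR2]; exact hkey2
  by_cases hp6 : 6 ≤ W.card
  · -- 6 ≤ p ≤ 9 : the big master inequality
    have sq5 : ∀ a : ℕ, a ≤ 3 → 5 * a ≤ a * a + 6 := by
      intro a ha; interval_cases a <;> omega
    have e4 : 5 * (∑ v ∈ W, degW G W v) ≤ (∑ v ∈ W, degW G W v * degW G W v) + 6 * W.card := by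
      have h := Finset.sum_le_sum (fun v (_ : v ∈ W) => sq5 (degW G W v) (hdle v))
      rw [Finset.sum_add_distrib, Finset.sum_const, smul_eq_mul, ← Finset.mul_sum] at h
      calc 5 * (∑ v ∈ W, degW G W v) ≤ _ := h
        _ = (∑ v ∈ W, degW G W v * degW G W v) + 6 * W.card := by ring
    set p := W.card with hp
    interval_cases p <;> omega
  · -- p = 5
    have hp5' : W.card = 5 := by omega
    have hVMs : ∀ v ∈ W, 1 + fW G W v ≤ W.card := fun v hv => vertexMooreW noC3 noC4 hv
    have h20 : W.card + (∑ v ∈ W, degW G W v * degW G W v) ≤ W.card * W.card := by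
      have h1 : ∑ v ∈ W, (1 + fW G W v) ≤ ∑ _v ∈ W, W.card := Finset.sum_le_sum hVMs
      rw [Finset.sum_add_distrib, Finset.sum_const, Finset.sum_const, smul_eq_mul,
        smul_eq_mul, mul_one, hexd] at h1
      exact h1
    have sq4 : ∀ a : ℕ, a ≤ 3 → 4 * a ≤ a * a + 4 := by
      intro a ha; interval_cases a <;> omega
    have e4' : 4 * (∑ v ∈ W, degW G W v) ≤ (∑ v ∈ W, degW G W v * degW G W v) + 4 * W.card := by
      have h := Finset.sum_le_sum (fun v (_ : v ∈ W) => sq4 (degW G W v) (hdle v))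
      rw [Finset.sum_add_distrib, Finset.sum_const, smul_eq_mul, ← Finset.mul_sum] at h
      calc 4 * (∑ v ∈ W, degW G W v) ≤ _ := h
        _ = (∑ v ∈ W, degW G W v * degW G W v) + 4 * W.card := by ring
    have hS1v : (∑ v ∈ W, degW G W v) = 10 := by
      rw [hp5'] at hS1 h20 e4'
      omega
    have hS2v : (∑ v ∈ W, degW G W v * degW G W v) = 20 := by
      rw [hp5'] at h20 e4'
      omega
    have hsumeq : ∑ v ∈ W, (4 * degW G W v) = ∑ v ∈ W, (degW G W v * degW G W v + 4) := by
      rw [Finset.sum_add_distrib, Finset.sum_const, smul_eq_mul, ← Finset.mul_sum,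
        hS1v, hS2v, hp5']
      norm_num
    have hptle : ∀ v ∈ W, 4 * degW G W v ≤ degW G W v * degW G W v + 4 :=
      fun v _ => sq4 (degW G W v) (hdle v)
    have hpt : ∀ v ∈ W, degW G W v = 2 := by
      intro v hv
      have h := (Finset.sum_eq_sum_iff_of_le hptle).mp hsumeq v hv
      have hv3 := hdle v
      set a := degW G W v with ha
      interval_cases a <;> omega
    have hWne : W.Nonempty := Finset.card_pos.mp (by omega)
    obtain ⟨v, hv⟩ := hWne
    have hdv : degW G W v = 2 := hpt v hv
    have hnbrne : (nbrW G W v).Nonempty := Finset.card_pos.mp (by rw [card_nbrW]; omega)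
    obtain ⟨w, hw⟩ := hnbrne
    obtain ⟨hadj, hwW⟩ := mem_nbrW.mp hw
    have hfgen : ∀ x ∈ W, fW G W x = 2 * degW G W x := by
      intro x hx
      rw [fW, Finset.sum_congr rfl (fun y hy => hpt y (mem_nbrW.mp hy).2),
        Finset.sum_const, smul_eq_mul, card_nbrW]
      ring
    have hEMfin := edgeMooreW noC3 noC4 noC5 hv hwW hadj
    rw [hfgen v hv, hfgen w hwW, hdv, hpt w hwW, hp5'] at hEMfin
    omega

end BreakerCounting

/-- A cubic graph with at least 10 vertices having a breaker (a cycle of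
length at most 5 meeting every cycle of length at most 5) has at least 14 vertices. -/
theorem cubic_with_breaker_has_14_vertices {V : Type*} [Fintype V] (G : SimpleGraph V)
    [DecidableRel G.Adj] (hcubic : G.IsRegularOfDegree 3)
    (h10 : 10 ≤ Fintype.card V)
    (hbreaker : ∃ (u : V) (c : G.Walk u u), c.IsCycle ∧ c.length ≤ 5 ∧
      ∀ (v : V) (c' : G.Walk v v), c'.IsCycle → c'.length ≤ 5 →
        ∃ x, x ∈ c.support ∧ x ∈ c'.support) :
    14 ≤ Fintype.card V := by
  classical
  by_contra hlt
  push_neg at hlt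
  obtain ⟨u0, c, hc, hclen, hbr⟩ := hbreaker
  -- parity : the number of vertices is even
  have hpar : 3 * Fintype.card V = 2 * G.edgeFinset.card := by
    have h1 := G.sum_degrees_eq_twice_card_edges
    have h2 : ∑ v : V, G.degree v = 3 * Fintype.card V := by
      rw [Finset.sum_congr rfl fun v _ => hcubic v, Finset.sum_const, smul_eq_mul,
        mul_comm, Finset.card_univ]
    omega
  set S : Finset V := c.support.toFinset with hSdef
  have hk : S.card = c.length := breaker_cycle_support_card hc
  have hk3 : 3 ≤ S.card := by rw [hk]; exact hc.three_le_length
  have hk5 : S.card ≤ 5 := by rw [hk]; exact hclen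
  set W : Finset V := Sᶜ with hWdef
  have hpk : S.card + W.card = Fintype.card V := Finset.card_add_card_compl S
  have hmemW : ∀ x, x ∈ W ↔ x ∉ c.support := by
    intro x; rw [hWdef, Finset.mem_compl, hSdef, List.mem_toFinset]
  -- no short cycle inside W
  have noshort : ∀ (v : V) (w : G.Walk v v), w.IsCycle → w.length ≤ 5 →
      (∀ x ∈ w.support, x ∈ W) → False := by
    intro v w hw hwl hsup
    obtain ⟨x, hx1, hx2⟩ := hbr v w hw hwl
    exact (hmemW x).mp (hsup x hx2) hx1
  have noC3 : ∀ {a b c' : V}, a ∈ W → b ∈ W → c' ∈ W →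
      G.Adj a b → G.Adj b c' → G.Adj c' a → False := by
    intro a b c' ha hb hc' h1 h2 h3
    obtain ⟨w, hw, hwl, hsup⟩ := breaker_cycle3 h1 h2 h3
    exact noshort a w hw hwl fun x hx => by
      rcases hsup x hx with rfl | rfl | rfl <;> assumption
  have noC4 : ∀ {a b c' d : V}, a ∈ W → b ∈ W → c' ∈ W → d ∈ W →
      G.Adj a b → G.Adj b c' → G.Adj c' d → G.Adj d a → a ≠ c' → b ≠ d → False := by
    intro a b c' d ha hb hc' hd h1 h2 h3 h4 h5 h6
    obtain ⟨w, hw, hwl, hsup⟩ := breaker_cycle4 h1 h2 h3 h4 h5 h6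
    exact noshort a w hw hwl fun x hx => by
      rcases hsup x hx with rfl | rfl | rfl | rfl <;> assumption
  have noC5 : ∀ {a b c' d e : V}, a ∈ W → b ∈ W → c' ∈ W → d ∈ W → e ∈ W →
      G.Adj a b → G.Adj b c' → G.Adj c' d → G.Adj d e → G.Adj e a →
      a ≠ c' → a ≠ d → b ≠ d → b ≠ e → c' ≠ e → False := by
    intro a b c' d e ha hb hc' hd he h1 h2 h3 h4 h5 h6 h7 h8 h9 h1o
    obtain ⟨w, hw, hwl, hsup⟩ := breaker_cycle5 h1 h2 h3 h4 h5 h6 h7 h8 h9 h1o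
    exact noshort a w hw hwl fun x hx => by
      rcases hsup x hx with rfl | rfl | rfl | rfl | rfl <;> assumption
  -- degree bookkeeping
  have hsplit : ∀ v : V, degW G W v + (G.neighborFinset v ∩ S).card = 3 := by
    intro v
    have h1 : nbrW G W v = G.neighborFinset v \ S := by
      rw [nbrW, hWdef]
      ext y
      simp [Finset.mem_sdiff]
    rw [degW, h1, Finset.card_sdiff_add_card_inter]
    exact hcubic v
  have hdle : ∀ v : V, degW G W v ≤ 3 := fun v => by have := hsplit v; omega
  -- every vertex of the breaker has at least two neighbours on the breaker
  have hcross : ∀ s ∈ S, (G.neighborFinset s ∩ W).card ≤ 1 := by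
    intro s hs
    have hsup : s ∈ c.support := by rwa [hSdef, List.mem_toFinset] at hs
    obtain ⟨x, y, hxy, hax, hay, hxs, hys⟩ := breaker_two_nbrs hc hsup
    have hsub2 : ({x, y} : Finset V) ⊆ G.neighborFinset s ∩ S := by
      intro z hz
      rcases Finset.mem_insert.mp hz with rfl | hz
      · exact Finset.mem_inter.mpr ⟨(G.mem_neighborFinset s z).mpr hax,
          by rw [hSdef, List.mem_toFinset]; exact hxs⟩
      · rw [Finset.mem_singleton] at hz
        subst hz
        exact Finset.mem_inter.mpr ⟨(G.mem_neighborFinset s z).mpr hay,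
          by rw [hSdef, List.mem_toFinset]; exact hys⟩
    have h2 : 2 ≤ (G.neighborFinset s ∩ S).card := by
      calc 2 = ({x, y} : Finset V).card := (Finset.card_pair hxy).symm
        _ ≤ _ := Finset.card_le_card hsub2
    have h3 := hsplit s
    have h4 : (G.neighborFinset s ∩ S).card + (G.neighborFinset s ∩ W).card
        = (G.neighborFinset s).card := by
      rw [hWdef]
      rw [← Finset.card_sdiff_add_card_inter (G.neighborFinset s) S]
      have : G.neighborFinset s ∩ Sᶜ = G.neighborFinset s \ S := by
        ext y; simp [Finset.mem_sdiff]
      rw [this]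
      omega
    have h5 : (G.neighborFinset s).card = 3 := hcubic s
    omega
  -- total deficiency is at most 5
  have hD : 3 * W.card ≤ (∑ v ∈ W, degW G W v) + 5 := by
    have h1 : ∑ v ∈ W, (degW G W v + (G.neighborFinset v ∩ S).card) = 3 * W.card := by
      rw [Finset.sum_congr rfl fun v _ => hsplit v, Finset.sum_const, smul_eq_mul, mul_comm]
    rw [Finset.sum_add_distrib] at h1
    have h2 : ∑ v ∈ W, (G.neighborFinset v ∩ S).card ≤ 5 := by
      rw [count_symW W S]
      calc ∑ s ∈ S, (G.neighborFinset s ∩ W).card ≤ ∑ _s ∈ S, 1 :=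
            Finset.sum_le_sum hcross
        _ = S.card := by rw [Finset.sum_const, smul_eq_mul, mul_one]
        _ ≤ 5 := hk5
    omega
  -- size bounds for W
  have hp5 : 5 ≤ W.card := by omega
  have hp9 : W.card ≤ 9 := by omega
  exact mainBoundW noC3 noC4 noC5 hD hdle hp5 hp9
end

section
/- Let G be a cubic graph and let C_0, C_1, ..., C_5 be six pentagons such that each pair shares at most one edge, E(C_0) \cap E(C_i) is nonempty for i = 1,...,5, and consecutive circuits among C_1,...,C_5,C_1 share exactly one edge and its two ends while non-consecutive ones are vertex-disjoint. Then |V(C_0) \cup V(C_1) \cup ... \cup V(C_5)| = 15. -/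
open SimpleGraph Walk

private lemma exists_fst_edge {V : Type*} {G : SimpleGraph V} {a b : V}
    (p : G.Walk a b) (hab : a ≠ b) : ∃ z, s(a, z) ∈ p.edges := by
  cases p with
  | nil => exact absurd rfl hab
  | cons h q =>
    rename_i v
    exact ⟨v, by rw [Walk.edges_cons]; exact List.mem_cons_self⟩

private lemma cycle_two_aux {V : Type*} {G : SimpleGraph V} {x : V}
    (d : G.Walk x x) (hd : d.IsCycle) :
    ∃ z w, z ≠ w ∧ s(x, z) ∈ d.edges ∧ s(x, w) ∈ d.edges := by
  cases d with
  | nil => exact absurd hd (Walk.IsCycle.not_of_nil)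
  | cons h q =>
    rename_i v
    rw [Walk.cons_isCycle_iff] at hd
    obtain ⟨z, hz⟩ := exists_fst_edge q.reverse h.ne
    have hz' : s(x, z) ∈ q.edges := by
      rwa [Walk.edges_reverse, List.mem_reverse] at hz
    refine ⟨v, z, ?_, ?_, ?_⟩
    · intro hbz
      subst hbz
      exact hd.2 hz'
    · rw [Walk.edges_cons]; exact List.mem_cons_self
    · rw [Walk.edges_cons]; exact List.mem_cons.2 (Or.inr hz')

/-- Every vertex on a cycle has two distinct neighbours along that cycle. -/
private lemma cycle_two {V : Type*} [DecidableEq V] {G : SimpleGraph V} {a : V} {c : G.Walk a a}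
    (hc : c.IsCycle) {x : V} (hx : x ∈ c.support) :
    ∃ z w, z ≠ w ∧ s(x, z) ∈ c.edges ∧ s(x, w) ∈ c.edges := by
  obtain ⟨z, w, hzw, hz, hw⟩ := cycle_two_aux (c.rotate x hx) (hc.rotate hx)
  have hmem := (c.rotate_edges x hx).mem_iff (a := s(x, z))
  have hmem' := (c.rotate_edges x hx).mem_iff (a := s(x, w))
  exact ⟨z, w, hzw, hmem.mp hz, hmem'.mp hw⟩

private lemma pick_ne {α : Type*} {z w y : α} (h : z ≠ w) {P : α → Prop}
    (hz : P z) (hw : P w) : ∃ t, t ≠ y ∧ P t := by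
  by_cases hzy : z = y
  · exact ⟨w, fun hwy => h (hzy.trans hwy.symm), hw⟩
  · exact ⟨z, hzy, hz⟩

/-- Key cubic-degree argument: an edge cannot lie in three of the cycles. -/
private lemma no_triple {V : Type*} [Fintype V] [DecidableEq V]
    {G : SimpleGraph V} [DecidableRel G.Adj]
    (hcubic : G.IsRegularOfDegree 3) {a b d : V}
    {p : G.Walk a a} {q : G.Walk b b} {r : G.Walk d d}
    (hp : p.IsCycle) (hq : q.IsCycle) (hr : r.IsCycle)
    {x y : V} (hxy : G.Adj x y)
    (hqr : q.edges.toFinset ∩ r.edges.toFinset = {s(x, y)})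
    (hpq : (p.edges.toFinset ∩ q.edges.toFinset).card ≤ 1)
    (hpr : (p.edges.toFinset ∩ r.edges.toFinset).card ≤ 1)
    (hep : s(x, y) ∈ p.edges) : False := by
  have hmemqr : s(x, y) ∈ q.edges.toFinset ∩ r.edges.toFinset := by
    rw [hqr]; simp
  have heq : s(x, y) ∈ q.edges := by
    simpa using (Finset.mem_inter.1 hmemqr).1
  have her : s(x, y) ∈ r.edges := by
    simpa using (Finset.mem_inter.1 hmemqr).2
  have hxp : x ∈ p.support := p.fst_mem_support_of_mem_edges hep
  have hxq : x ∈ q.support := q.fst_mem_support_of_mem_edges heq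
  have hxr : x ∈ r.support := r.fst_mem_support_of_mem_edges her
  obtain ⟨z0, w0, h0, hz0, hw0⟩ := cycle_two hp hxp
  obtain ⟨zq, wq, hq0, hzq, hwq⟩ := cycle_two hq hxq
  obtain ⟨zr, wr, hr0, hzr, hwr⟩ := cycle_two hr hxr
  obtain ⟨t0, ht0y, ht0⟩ : ∃ t, t ≠ y ∧ s(x, t) ∈ p.edges := pick_ne h0 hz0 hw0
  obtain ⟨tq, htqy, htq⟩ : ∃ t, t ≠ y ∧ s(x, t) ∈ q.edges := pick_ne hq0 hzq hwq
  obtain ⟨tr, htry, htr⟩ : ∃ t, t ≠ y ∧ s(x, t) ∈ r.edges := pick_ne hr0 hzr hwr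
  -- tq ≠ tr
  have hne_qr : tq ≠ tr := by
    intro h
    have : s(x, tq) ∈ q.edges.toFinset ∩ r.edges.toFinset := by
      simp only [Finset.mem_inter, List.mem_toFinset]
      exact ⟨htq, h ▸ htr⟩
    rw [hqr, Finset.mem_singleton] at this
    exact htqy (Sym2.congr_right.mp this)
  -- generic: t0 cannot equal the picked vertex of q (or r)
  have key : ∀ (e : V) (w : G.Walk e e), (p.edges.toFinset ∩ w.edges.toFinset).card ≤ 1 →
      s(x, y) ∈ w.edges → ∀ t, t ≠ y → s(x, t) ∈ w.edges → t0 ≠ t := by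
    intro e w hle hyw t hty htw h
    have hsub : ({s(x, t0), s(x, y)} : Finset (Sym2 V)) ⊆
        p.edges.toFinset ∩ w.edges.toFinset := by
      intro u hu
      simp only [Finset.mem_insert, Finset.mem_singleton] at hu
      rcases hu with h1 | h1 <;> subst h1 <;>
        simp only [Finset.mem_inter, List.mem_toFinset]
      · exact ⟨ht0, h ▸ htw⟩
      · exact ⟨hep, hyw⟩
    have hcard : ({s(x, t0), s(x, y)} : Finset (Sym2 V)).card = 2 :=
      Finset.card_pair (fun hc => ht0y (Sym2.congr_right.mp hc))
    have := Finset.card_le_card hsub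
    omega
  have hne_0q : t0 ≠ tq := key _ q hpq heq tq htqy htq
  have hne_0r : t0 ≠ tr := key _ r hpr her tr htry htr
  -- all four are neighbours of x
  have hsub : ({y, t0, tq, tr} : Finset V) ⊆ G.neighborFinset x := by
    intro v hv
    simp only [Finset.mem_insert, Finset.mem_singleton] at hv
    rw [SimpleGraph.mem_neighborFinset]
    rcases hv with h1 | h1 | h1 | h1 <;> subst h1
    · exact hxy
    · exact p.adj_of_mem_edges ht0
    · exact q.adj_of_mem_edges htq
    · exact r.adj_of_mem_edges htr
  have hcard4 : ({y, t0, tq, tr} : Finset V).card = 4 := by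
    rw [Finset.card_insert_of_notMem (by simp [Ne.symm ht0y, Ne.symm htqy, Ne.symm htry]),
        Finset.card_insert_of_notMem (by simp [hne_0q, hne_0r]),
        Finset.card_pair hne_qr]
  have := Finset.card_le_card hsub
  rw [hcard4, SimpleGraph.card_neighborFinset_eq_degree, hcubic x] at this
  omega

/-- Edges of vertex-disjoint walks are disjoint. -/
private lemma disj_edges {V : Type*} [DecidableEq V] {G : SimpleGraph V} {a b : V}
    {p : G.Walk a a} {q : G.Walk b b}
    (h : p.support.toFinset ∩ q.support.toFinset = ∅)
    {e : Sym2 V} (hep : e ∈ p.edges) (heq : e ∈ q.edges) : False := by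
  induction e using Sym2.ind with
  | _ x y =>
    have hx : x ∈ p.support.toFinset ∩ q.support.toFinset := by
      simp only [Finset.mem_inter, List.mem_toFinset]
      exact ⟨p.fst_mem_support_of_mem_edges hep, q.fst_mem_support_of_mem_edges heq⟩
    simp [h] at hx

private lemma support_card {V : Type*} [DecidableEq V] {G : SimpleGraph V} {a : V}
    {c : G.Walk a a} (hc : c.IsCycle) (hl : c.length = 5) :
    c.support.toFinset.card = 5 := by
  have htail : c.support.tail.Nodup := hc.support_nodup
  have hlen : c.support.tail.length = 5 := by
    have := c.length_support
    have h2 : c.support.length = c.support.tail.length + 1 := by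
      rw [c.support_eq_cons]; simp
    omega
  have hne : c.support.tail ≠ [] := by
    intro h; rw [h] at hlen; simp at hlen
  have hmem : a ∈ c.support.tail := by
    have hg : c.support.tail.getLast hne = a := by
      rw [List.getLast_tail]; exact c.getLast_support
    have hm := List.getLast_mem hne
    rwa [hg] at hm
  calc c.support.toFinset.card = c.support.tail.toFinset.card := by
        rw [c.support_eq_cons]
        rw [List.toFinset_cons, Finset.insert_eq_of_mem (List.mem_toFinset.2 hmem), List.tail_cons]
    _ = 5 := by rw [List.toFinset_card_of_nodup htail, hlen]

/-- Let `C₀, C₁, …, C₅` be six pentagons of a cubic graph such that each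
pair shares at most one edge, `E(C₀) ∩ E(Cᵢ) ≠ ∅` for `i = 1, …, 5`, consecutive
pentagons among `C₁, …, C₅, C₁` share exactly one edge together with its two ends, and
non-consecutive ones are vertex-disjoint.  Then their vertex sets together contain
exactly 15 vertices. -/
theorem six_pentagons_fifteen_vertices {V : Type*} [Fintype V] [DecidableEq V]
    (G : SimpleGraph V) [DecidableRel G.Adj]
    (hcubic : G.IsRegularOfDegree 3)
    (u : Fin 6 → V) (c : ∀ i, G.Walk (u i) (u i))
    (hcyc : ∀ i, (c i).IsCycle) (hlen : ∀ i, (c i).length = 5)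
    (hpair : ∀ i j, i ≠ j → ((c i).edges.toFinset ∩ (c j).edges.toFinset).card ≤ 1)
    (hmeet : ∀ i : Fin 6, i ≠ 0 → ((c 0).edges.toFinset ∩ (c i).edges.toFinset).Nonempty)
    (hconsec : ∀ i j : Fin 6,
      ((i, j) = (1, 2) ∨ (i, j) = (2, 3) ∨ (i, j) = (3, 4) ∨ (i, j) = (4, 5) ∨
        (i, j) = (5, 1)) →
      ∃ (x y : V), G.Adj x y ∧
        (c i).edges.toFinset ∩ (c j).edges.toFinset = {s(x, y)} ∧
        (c i).support.toFinset ∩ (c j).support.toFinset = {x, y})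
    (hdisj : ∀ i j : Fin 6,
      ((i, j) = (1, 3) ∨ (i, j) = (1, 4) ∨ (i, j) = (2, 4) ∨ (i, j) = (2, 5) ∨
        (i, j) = (3, 5)) →
      (c i).support.toFinset ∩ (c j).support.toFinset = ∅) :
    ((Finset.univ : Finset (Fin 6)).biUnion fun i => (c i).support.toFinset).card = 15 := by
  set S : Fin 6 → Finset V := fun i => (c i).support.toFinset with hS
  have cardS : ∀ i, (S i).card = 5 := fun i => support_card (hcyc i) (hlen i)
  -- consecutive data
  obtain ⟨x12, y12, a12, e12, s12⟩ := hconsec 1 2 (Or.inl rfl)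
  obtain ⟨x23, y23, a23, e23, s23⟩ := hconsec 2 3 (Or.inr (Or.inl rfl))
  obtain ⟨x34, y34, a34, e34, s34⟩ := hconsec 3 4 (Or.inr (Or.inr (Or.inl rfl)))
  obtain ⟨x45, y45, a45, e45, s45⟩ := hconsec 4 5 (Or.inr (Or.inr (Or.inr (Or.inl rfl))))
  obtain ⟨x51, y51, a51, e51, s51⟩ := hconsec 5 1 (Or.inr (Or.inr (Or.inr (Or.inr rfl))))
  have s12' : S 1 ∩ S 2 = {x12, y12} := s12
  have s23' : S 2 ∩ S 3 = {x23, y23} := s23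
  have s34' : S 3 ∩ S 4 = {x34, y34} := s34
  have s45' : S 4 ∩ S 5 = {x45, y45} := s45
  have s51' : S 5 ∩ S 1 = {x51, y51} := s51
  have d13 := hdisj 1 3 (Or.inl rfl)
  have d14 := hdisj 1 4 (Or.inr (Or.inl rfl))
  have d24 := hdisj 2 4 (Or.inr (Or.inr (Or.inl rfl)))
  have d25 := hdisj 2 5 (Or.inr (Or.inr (Or.inr (Or.inl rfl))))
  have d35 := hdisj 3 5 (Or.inr (Or.inr (Or.inr (Or.inr rfl))))
  have d13' : S 1 ∩ S 3 = ∅ := d13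
  have d14' : S 1 ∩ S 4 = ∅ := d14
  have d24' : S 2 ∩ S 4 = ∅ := d24
  have d25' : S 2 ∩ S 5 = ∅ := d25
  have d35' : S 3 ∩ S 5 = ∅ := d35
  -- the edges that C₀ shares with the others
  obtain ⟨e1, he1⟩ := hmeet 1 (by decide)
  obtain ⟨e2, he2⟩ := hmeet 2 (by decide)
  obtain ⟨e3, he3⟩ := hmeet 3 (by decide)
  obtain ⟨e4, he4⟩ := hmeet 4 (by decide)
  obtain ⟨e5, he5⟩ := hmeet 5 (by decide)
  rw [Finset.mem_inter, List.mem_toFinset, List.mem_toFinset] at he1 he2 he3 he4 he5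
  -- distinctness of e's: nonconsecutive pairs
  have nc : ∀ i j : Fin 6, (c i).support.toFinset ∩ (c j).support.toFinset = ∅ →
      ∀ {e f : Sym2 V}, e ∈ (c i).edges → f ∈ (c j).edges → e ≠ f := by
    intro i j hij e f hei hfj h
    exact disj_edges hij hei (h ▸ hfj)
  have n13 : e1 ≠ e3 := nc 1 3 d13 he1.2 he3.2
  have n14 : e1 ≠ e4 := nc 1 4 d14 he1.2 he4.2
  have n24 : e2 ≠ e4 := nc 2 4 d24 he2.2 he4.2
  have n25 : e2 ≠ e5 := nc 2 5 d25 he2.2 he5.2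
  have n35 : e3 ≠ e5 := nc 3 5 d35 he3.2 he5.2
  -- consecutive pairs via the cubic argument
  have cc : ∀ i j : Fin 6, i ≠ (0 : Fin 6) → j ≠ (0 : Fin 6) →
      ∀ {x y : V}, G.Adj x y →
      (c i).edges.toFinset ∩ (c j).edges.toFinset = {s(x, y)} →
      ∀ {e f : Sym2 V}, e ∈ (c 0).edges ∧ e ∈ (c i).edges →
        f ∈ (c 0).edges ∧ f ∈ (c j).edges → e ≠ f := by
    intro i j hi hj x y hxy hef e f he hf h
    subst h
    have hexy : e = s(x, y) := by
      have : e ∈ (c i).edges.toFinset ∩ (c j).edges.toFinset := by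
        simp only [Finset.mem_inter, List.mem_toFinset]
        exact ⟨he.2, hf.2⟩
      rwa [hef, Finset.mem_singleton] at this
    exact no_triple hcubic (hcyc 0) (hcyc i) (hcyc j) hxy hef
      (hpair 0 i (Ne.symm hi)) (hpair 0 j (Ne.symm hj)) (hexy ▸ he.1)
  have n12 : e1 ≠ e2 := cc 1 2 (by decide) (by decide) a12 e12 he1 he2
  have n23 : e2 ≠ e3 := cc 2 3 (by decide) (by decide) a23 e23 he2 he3
  have n34 : e3 ≠ e4 := cc 3 4 (by decide) (by decide) a34 e34 he3 he4
  have n45 : e4 ≠ e5 := cc 4 5 (by decide) (by decide) a45 e45 he4 he5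
  have n15 : e5 ≠ e1 := cc 5 1 (by decide) (by decide) a51 e51 he5 he1
  -- the five edges are exactly the edges of C₀
  have cardE0 : (c 0).edges.toFinset.card = 5 := by
    rw [List.toFinset_card_of_nodup (hcyc 0).edges_nodup, Walk.length_edges, hlen 0]
  have hsubE : ({e1, e2, e3, e4, e5} : Finset (Sym2 V)) ⊆ (c 0).edges.toFinset := by
    intro e he
    simp only [Finset.mem_insert, Finset.mem_singleton] at he
    rw [List.mem_toFinset]
    rcases he with h | h | h | h | h <;> subst h
    exacts [he1.1, he2.1, he3.1, he4.1, he5.1]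
  have cardE : ({e1, e2, e3, e4, e5} : Finset (Sym2 V)).card = 5 := by
    rw [Finset.card_insert_of_notMem (by simp [n12, n13, n14, n15.symm]),
        Finset.card_insert_of_notMem (by simp [n23, n24, n25]),
        Finset.card_insert_of_notMem (by simp [n34, n35]),
        Finset.card_pair n45]
  have hE0 : ({e1, e2, e3, e4, e5} : Finset (Sym2 V)) = (c 0).edges.toFinset :=
    Finset.eq_of_subset_of_card_le hsubE (by omega)
  -- S 0 is contained in the union of the others
  have hsub0 : S 0 ⊆ S 1 ∪ S 2 ∪ S 3 ∪ S 4 ∪ S 5 := by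
    intro v hv
    have hv : v ∈ (c 0).support := List.mem_toFinset.1 hv
    obtain ⟨z, w, hzw, hz, hw⟩ := cycle_two (hcyc 0) hv
    have : s(v, z) ∈ ({e1, e2, e3, e4, e5} : Finset (Sym2 V)) := by
      rw [hE0, List.mem_toFinset]; exact hz
    simp only [Finset.mem_insert, Finset.mem_singleton] at this
    simp only [Finset.mem_union, hS, List.mem_toFinset]
    rcases this with h | h | h | h | h
    · exact Or.inl (Or.inl (Or.inl (Or.inl ((c 1).fst_mem_support_of_mem_edges (h ▸ he1.2)))))
    · exact Or.inl (Or.inl (Or.inl (Or.inr ((c 2).fst_mem_support_of_mem_edges (h ▸ he2.2)))))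
    · exact Or.inl (Or.inl (Or.inr ((c 3).fst_mem_support_of_mem_edges (h ▸ he3.2))))
    · exact Or.inl (Or.inr ((c 4).fst_mem_support_of_mem_edges (h ▸ he4.2)))
    · exact Or.inr ((c 5).fst_mem_support_of_mem_edges (h ▸ he5.2))
  -- inclusion–exclusion for the five outer pentagons
  have c12 : (S 1 ∩ S 2).card = 2 := by rw [s12']; exact Finset.card_pair a12.ne
  have c23 : (S 2 ∩ S 3).card = 2 := by rw [s23']; exact Finset.card_pair a23.ne
  have c34 : (S 3 ∩ S 4).card = 2 := by rw [s34']; exact Finset.card_pair a34.ne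
  have c45 : (S 4 ∩ S 5).card = 2 := by rw [s45']; exact Finset.card_pair a45.ne
  have h12 : (S 1 ∪ S 2).card = 8 := by
    have := Finset.card_union_add_card_inter (S 1) (S 2)
    rw [cardS, cardS, c12] at this; omega
  have h123 : (S 1 ∪ S 2 ∪ S 3).card = 11 := by
    have hi : ((S 1 ∪ S 2) ∩ S 3).card = 2 := by
      rw [Finset.union_inter_distrib_right, d13', Finset.empty_union, c23]
    have := Finset.card_union_add_card_inter (S 1 ∪ S 2) (S 3)
    rw [h12, cardS, hi] at this; omega
  have h1234 : (S 1 ∪ S 2 ∪ S 3 ∪ S 4).card = 14 := by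
    have hi : ((S 1 ∪ S 2 ∪ S 3) ∩ S 4).card = 2 := by
      rw [Finset.union_inter_distrib_right, Finset.union_inter_distrib_right,
        d14', d24', Finset.empty_union, Finset.empty_union, c34]
    have := Finset.card_union_add_card_inter (S 1 ∪ S 2 ∪ S 3) (S 4)
    rw [h123, cardS, hi] at this; omega
  have h12345 : (S 1 ∪ S 2 ∪ S 3 ∪ S 4 ∪ S 5).card = 15 := by
    have hi : ((S 1 ∪ S 2 ∪ S 3 ∪ S 4) ∩ S 5).card = 4 := by
      rw [Finset.union_inter_distrib_right, Finset.union_inter_distrib_right,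
        Finset.union_inter_distrib_right, d25', d35', Finset.union_empty, Finset.union_empty]
      have h15 : S 1 ∩ S 5 = {x51, y51} := by
        rw [Finset.inter_comm]; exact s51'
      rw [h15, s45']
      rw [Finset.card_union_of_disjoint, Finset.card_pair a51.ne, Finset.card_pair a45.ne]
      · rw [Finset.disjoint_left]
        intro v hv hv'
        have hv1 : v ∈ S 1 := by
          rw [← h15] at hv; exact (Finset.mem_inter.1 hv).1
        have hv4 : v ∈ S 4 := by
          rw [← s45'] at hv'; exact (Finset.mem_inter.1 hv').1
        have hin : v ∈ S 1 ∩ S 4 := Finset.mem_inter.2 ⟨hv1, hv4⟩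
        rw [d14'] at hin; exact absurd hin (Finset.notMem_empty v)
    have := Finset.card_union_add_card_inter (S 1 ∪ S 2 ∪ S 3 ∪ S 4) (S 5)
    rw [h1234, cardS, hi] at this; omega
  -- assemble
  have huniv : (Finset.univ : Finset (Fin 6)) = {0, 1, 2, 3, 4, 5} := by decide
  rw [huniv]
  have : ({0, 1, 2, 3, 4, 5} : Finset (Fin 6)).biUnion S
      = S 0 ∪ (S 1 ∪ S 2 ∪ S 3 ∪ S 4 ∪ S 5) := by
    simp only [Finset.biUnion_insert, Finset.singleton_biUnion]
    ac_rfl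
  show (({0, 1, 2, 3, 4, 5} : Finset (Fin 6)).biUnion S).card = 15
  rw [this, Finset.union_eq_right.mpr hsub0, h12345]
end

section
/- A cubic graph of girth at least 5 is theta-connected if and only if it has no shore, where a shore is a set X of vertices such that |\delta(X)| \le 5 and both G|X and G \ X contain at least two distinct cycles. -/
/-- The edge boundary `δ(X)`: edges of `G` with exactly one end in `X`. -/
def cut {V : Type*} (G : SimpleGraph V) (X : Set V) : Set (Sym2 V) :=
  {e | e ∈ G.edgeSet ∧ ∃ x ∈ X, ∃ y, y ∉ X ∧ e = s(x, y)}

/-- The set of cycles of `G`, each recorded by its edge set. -/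
def cycleEdgeSets {V : Type*} [DecidableEq V] (G : SimpleGraph V) :
    Set (Finset (Sym2 V)) :=
  {s | ∃ (u : V) (w : G.Walk u u), w.IsCycle ∧ w.edges.toFinset = s}

open SimpleGraph Finset

set_option linter.unusedSectionVars false
set_option maxHeartbeats 1000000

universe u

section Forest

variable {W : Type u} [Fintype W] [DecidableEq W]

/-- In a path starting at `v`, any edge containing `v` is the first edge. -/
private lemma first_edge_aux {H : SimpleGraph W} {v u x w : W} (h : H.Adj v x) (q' : H.Walk x u)
    (hq : (SimpleGraph.Walk.cons h q').IsPath) (hw : s(v, w) ∈ (SimpleGraph.Walk.cons h q').edges) :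
    w = x := by
  rw [SimpleGraph.Walk.edges_cons, List.mem_cons] at hw
  rcases hw with hw | hw
  · rw [Sym2.eq_iff] at hw
    rcases hw with ⟨-, rfl⟩ | ⟨h1, rfl⟩
    · rfl
    · exact absurd h1 h.ne
  · exfalso
    have hv : v ∈ q'.support := q'.fst_mem_support_of_mem_edges hw
    rw [SimpleGraph.Walk.cons_isPath_iff] at hq
    exact hq.2 hv

/-- An acyclic graph with an edge has a vertex with a unique neighbor. -/
private lemma exists_leaf {H : SimpleGraph W} [DecidableRel H.Adj] (hac : H.IsAcyclic)
    (hedge : H.edgeFinset.Nonempty) :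
    ∃ v x, H.Adj v x ∧ ∀ w, H.Adj v w → w = x := by
  obtain ⟨e, he⟩ := hedge
  rw [mem_edgeFinset] at he
  induction e with | _ a b => ?_
  rw [mem_edgeSet] at he
  have hne : (Finset.univ : Finset (Σ u v : W, H.Path u v)).Nonempty :=
    ⟨⟨a, b, ⟨Walk.cons he Walk.nil, by simp [Walk.IsPath.nil, he.ne]⟩⟩, Finset.mem_univ _⟩
  obtain ⟨⟨u, v, p⟩, -, hmax⟩ := Finset.exists_max_image Finset.univ
    (fun t : Σ u v : W, H.Path u v => t.2.2.1.length) hne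
  have hmax' : ∀ (u' v' : W) (p' : H.Walk u' v'), p'.IsPath → p'.length ≤ p.1.length := by
    intro u' v' p' hp'
    exact hmax ⟨u', v', ⟨p', hp'⟩⟩ (Finset.mem_univ _)
  have hlen1 : 1 ≤ p.1.length := by
    have := hmax' a b (Walk.cons he Walk.nil) (by simp [Walk.IsPath.nil, he.ne])
    simpa using this
  have hqpath : p.1.reverse.IsPath := p.2.reverse
  have hqnotnil : ¬ p.1.reverse.Nil := by
    rw [Walk.nil_iff_length_eq, Walk.length_reverse]
    omega
  obtain ⟨x, h, q', hq⟩ := Walk.not_nil_iff.mp hqnotnil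
  set q := p.1.reverse with hqdef
  refine ⟨v, x, h, fun w hw => ?_⟩
  by_contra hwx
  have hwv : w ≠ v := fun hh => H.irrefl (hh ▸ hw)
  by_cases hws : w ∈ q.support
  · have hr : (q.takeUntil w hws).IsPath := hqpath.takeUntil hws
    have hcyc : (Walk.cons hw.symm (q.takeUntil w hws)).IsCycle := by
      rw [Walk.cons_isCycle_iff]
      refine ⟨hr, fun hmem => ?_⟩
      have : s(v, w) ∈ q.edges := by
        rw [Sym2.eq_swap] at hmem
        exact q.edges_takeUntil_subset hws hmem
      rw [hq] at this hqpath
      exact hwx (first_edge_aux h q' hqpath this)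
    exact hac _ hcyc
  · have hext : (Walk.cons hw.symm q).IsPath := by
      rw [Walk.cons_isPath_iff]
      exact ⟨hqpath, hws⟩
    have := hmax' w u _ hext
    rw [Walk.length_cons, Walk.length_reverse] at this
    omega

/-- Edges of an induced subgraph, as a finset in the big graph. -/
private lemma edgeFinset_induce_image {H : SimpleGraph W} [DecidableRel H.Adj] (S : Set W)
    [DecidablePred (· ∈ S)] [Fintype (H.induce S).edgeSet] :
    ((H.induce S).edgeFinset.image (Sym2.map (Subtype.val : S → W)))
      = {e ∈ H.edgeFinset | ∀ x ∈ e, x ∈ S} := by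
  ext e
  simp only [Finset.mem_image, Finset.mem_filter, mem_edgeFinset, mem_edgeSet]
  constructor
  · rintro ⟨e', he', rfl⟩
    induction e' with | _ a b =>
    refine ⟨?_, ?_⟩
    · rw [mem_edgeSet] at he'
      exact he'
    · intro x hx
      rw [Sym2.map_pair_eq, Sym2.mem_iff] at hx
      rcases hx with rfl | rfl
      · exact a.2
      · exact b.2
  · intro ⟨he, hmem⟩
    induction e with | _ a b =>
    have ha : a ∈ S := hmem a (Sym2.mem_mk_left a b)
    have hb : b ∈ S := hmem b (Sym2.mem_mk_right a b)
    exact ⟨s(⟨a, ha⟩, ⟨b, hb⟩), by rwa [mem_edgeSet], by rw [Sym2.map_pair_eq]⟩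

private lemma card_edgeFinset_induce_compl_singleton {H : SimpleGraph W} [DecidableRel H.Adj]
    (v : W) [Fintype (H.induce ({v}ᶜ : Set W)).edgeSet] :
    (H.induce ({v}ᶜ : Set W)).edgeFinset.card = H.edgeFinset.card - H.degree v := by
  have hinj : Function.Injective (Sym2.map (Subtype.val : ({v}ᶜ : Set W) → W)) :=
    Sym2.map.injective Subtype.val_injective
  rw [← Finset.card_image_of_injective _ hinj, edgeFinset_induce_image]
  have himg : {e ∈ H.edgeFinset | ∀ x ∈ e, x ∈ ({v}ᶜ : Set W)}
      = H.edgeFinset \ H.incidenceFinset v := by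
    ext e
    simp only [Finset.mem_filter, Finset.mem_sdiff, mem_incidenceFinset]
    constructor
    · rintro ⟨he, hmem⟩
      refine ⟨he, fun hinc => ?_⟩
      have hv : v ∈ e := hinc.2
      exact hmem v hv rfl
    · rintro ⟨he, hinc⟩
      refine ⟨he, fun x hx => ?_⟩
      intro hxv
      subst hxv
      exact hinc ⟨(mem_edgeFinset.mp he), hx⟩
  rw [himg, Finset.card_sdiff_of_subset, card_incidenceFinset_eq_degree]
  · intro e he
    rw [mem_incidenceFinset] at he
    rw [mem_edgeFinset]
    exact he.1

end Forest

private lemma forest_bound : ∀ (n : ℕ) (W : Type u) [Fintype W] [DecidableEq W]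
    (H : SimpleGraph W) [DecidableRel H.Adj],
    Fintype.card W = n → H.IsAcyclic → Nonempty W → H.edgeFinset.card + 1 ≤ n := by
  intro n
  induction n using Nat.strong_induction_on with
  | _ n IH =>
    intro W _ _ H _ hcard hac hne
    by_cases hedge : H.edgeFinset.Nonempty
    · obtain ⟨v, x, hvx, hx⟩ := exists_leaf hac hedge
      have hdeg : H.degree v = 1 := by
        have : H.neighborFinset v = {x} := by
          ext w
          simp only [mem_neighborFinset, Finset.mem_singleton]
          exact ⟨fun h => hx w h, fun h => h ▸ hvx⟩
        rw [degree, this, Finset.card_singleton]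
      have hcard' : Fintype.card ({v}ᶜ : Set W) = n - 1 := by
        rw [← Set.toFinset_card, Set.toFinset_compl, Set.toFinset_singleton,
          Finset.card_compl, Finset.card_singleton, hcard]
      have hn2 : 2 ≤ n := by
        have : x ≠ v := hvx.ne'
        have h2 : ({x, v} : Finset W).card = 2 := Finset.card_pair this
        rw [← hcard]
        calc 2 = ({x, v} : Finset W).card := h2.symm
        _ ≤ (Finset.univ : Finset W).card := Finset.card_le_card (Finset.subset_univ _)
        _ = Fintype.card W := rfl
      have hne' : Nonempty ({v}ᶜ : Set W) := ⟨⟨x, by simp [hvx.ne']⟩⟩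
      have hac' : (H.induce ({v}ᶜ : Set W)).IsAcyclic := by
        intro u c hc
        have f : H.induce ({v}ᶜ : Set W) ↪g H := SimpleGraph.Embedding.induce _
        exact hac _ (hc.map (f := f.toHom) (show Function.Injective ⇑f.toHom from f.injective))
      have := IH (n-1) (by omega) ({v}ᶜ : Set W) (H.induce _) hcard' hac' hne'
      have hec := card_edgeFinset_induce_compl_singleton (H := H) v
      rw [hdeg] at hec
      have hpos : 1 ≤ H.edgeFinset.card := Finset.card_pos.mpr hedge
      omega
    · rw [Finset.not_nonempty_iff_eq_empty] at hedge
      rw [hedge]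
      simp only [Finset.card_empty]
      rw [← hcard]
      exact Fintype.card_pos

section Cycles

variable {W : Type u} [Fintype W] [DecidableEq W]

private lemma exists_cycle {H : SimpleGraph W} [DecidableRel H.Adj]
    (h1 : 1 ≤ H.edgeFinset.card) (h2 : Fintype.card W ≤ H.edgeFinset.card) :
    ∃ (u : W) (w : H.Walk u u), w.IsCycle := by
  have hne : Nonempty W := by
    obtain ⟨e, he⟩ := Finset.card_pos.mp h1
    induction e with | _ a b => exact ⟨a⟩
  by_contra h
  push_neg at h
  have hac : H.IsAcyclic := fun u c hc => h u c hc
  have := forest_bound (Fintype.card W) W H rfl hac hne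
  omega

private lemma two_cycles {H : SimpleGraph W} [DecidableRel H.Adj]
    (h : Fintype.card W + 1 ≤ H.edgeFinset.card) :
    2 ≤ (cycleEdgeSets H).ncard := by
  obtain ⟨u, c, hc⟩ := exists_cycle (H := H) (by omega) (by omega)
  have hne : c.edges ≠ [] := by
    intro h0
    have := hc.three_le_length
    have : c.edges.length = c.length := c.length_edges
    simp [h0] at this
    omega
  obtain ⟨e₀, he₀⟩ := List.exists_mem_of_ne_nil _ hne
  have he₀E : e₀ ∈ H.edgeFinset := by
    rw [mem_edgeFinset]; exact c.edges_subset_edgeSet he₀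
  haveI : DecidableRel (H.deleteEdges (({e₀} : Finset (Sym2 W)) : Set (Sym2 W))).Adj := fun a b =>
    decidable_of_iff (H.Adj a b ∧ s(a, b) ∉ (({e₀} : Finset (Sym2 W)) : Set (Sym2 W)))
      (by rw [SimpleGraph.deleteEdges_adj])
  have hdel : (H.deleteEdges ({e₀} : Finset (Sym2 W))).edgeFinset
      = H.edgeFinset \ {e₀} := by
    rw [edgeFinset_deleteEdges]
  have hcard' : (H.deleteEdges ({e₀} : Finset (Sym2 W))).edgeFinset.card
      = H.edgeFinset.card - 1 := by
    rw [hdel, Finset.card_sdiff_of_subset (by simpa using he₀E)]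
    simp
  have hW1 : 1 ≤ Fintype.card W := Fintype.card_pos_iff.mpr ⟨u⟩
  obtain ⟨u', c', hc'⟩ := exists_cycle (H := H.deleteEdges ({e₀} : Finset (Sym2 W)))
    (by omega) (by omega)
  have hsub : ∀ e ∈ c'.edges, e ∈ H.edgeSet := fun e he =>
    (SimpleGraph.edgeSet_mono (H.deleteEdges_le _)) (c'.edges_subset_edgeSet he)
  have hc'' : (c'.transfer H hsub).IsCycle := hc'.transfer hsub
  have hedges : (c'.transfer H hsub).edges = c'.edges := c'.edges_transfer hsub
  have hmem1 : c.edges.toFinset ∈ cycleEdgeSets H := ⟨u, c, hc, rfl⟩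
  have hmem2 : (c'.transfer H hsub).edges.toFinset ∈ cycleEdgeSets H :=
    ⟨u', c'.transfer H hsub, hc'', rfl⟩
  have hne2 : c.edges.toFinset ≠ (c'.transfer H hsub).edges.toFinset := by
    intro hEq
    have h1 : e₀ ∈ c.edges.toFinset := List.mem_toFinset.mpr he₀
    rw [hEq, hedges] at h1
    have := c'.edges_subset_edgeSet (List.mem_toFinset.mp h1)
    rw [edgeSet_deleteEdges] at this
    simp at this
  exact (Set.one_lt_ncard_iff (Set.toFinite _)).mpr ⟨_, _, hmem1, hmem2, hne2⟩

end Cycles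

section Counting

variable {V : Type*} [Fintype V] [DecidableEq V] (G : SimpleGraph V) [DecidableRel G.Adj]

private lemma degree_induce (S : Set V) [DecidablePred (· ∈ S)]
    [DecidableRel (G.induce S).Adj] (u : ↥S) :
    (G.induce S).degree u = (G.neighborFinset ↑u ∩ S.toFinset).card := by
  rw [degree, ← Finset.card_image_of_injective ((G.induce S).neighborFinset u)
    (Subtype.val_injective)]
  congr 1
  ext w
  simp only [Finset.mem_image, mem_neighborFinset, Finset.mem_inter, Set.mem_toFinset]
  constructor
  · rintro ⟨w', hw', rfl⟩
    exact ⟨hw', w'.2⟩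
  · rintro ⟨hadj, hw⟩
    exact ⟨⟨w, hw⟩, hadj, rfl⟩

private lemma cut_finset_eq (S : Set V) [DecidablePred (· ∈ S)] [Fintype ↥(cut G S)] :
    (cut G S).toFinset = S.toFinset.biUnion
      (fun x => (G.neighborFinset x \ S.toFinset).image (fun y => s(x, y))) := by
  ext e
  rw [Set.mem_toFinset]
  simp only [Set.mem_toFinset, Finset.mem_biUnion, Finset.mem_image, Finset.mem_sdiff,
    mem_neighborFinset, cut, Set.mem_setOf_eq, mem_edgeSet]
  constructor
  · rintro ⟨he, x, hx, y, hy, rfl⟩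
    exact ⟨x, hx, y, ⟨he, hy⟩, rfl⟩
  · rintro ⟨x, hx, y, ⟨hadj, hy⟩, rfl⟩
    exact ⟨hadj, x, hx, y, hy, rfl⟩

private lemma cnt (hcubic : G.IsRegularOfDegree 3) (S : Set V) :
    3 * S.ncard = 2 * Nat.card (G.induce S).edgeSet + (cut G S).ncard := by
  classical
  rw [Set.ncard_eq_toFinset_card', Set.ncard_eq_toFinset_card']
  have hNat : Nat.card (G.induce S).edgeSet = (G.induce S).edgeFinset.card := by
    rw [Nat.card_eq_fintype_card, edgeFinset, Set.toFinset_card]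
  rw [hNat]
  have hdeg : ∀ x ∈ S.toFinset, G.degree x = 3 := fun x _ => hcubic x
  have hsum : ∑ x ∈ S.toFinset, G.degree x = 3 * S.toFinset.card := by
    rw [Finset.sum_congr rfl hdeg, Finset.sum_const, smul_eq_mul, mul_comm]
  have hsplit : ∀ x : V, G.degree x = (G.neighborFinset x ∩ S.toFinset).card
      + (G.neighborFinset x \ S.toFinset).card := by
    intro x
    rw [degree, ← Finset.card_inter_add_card_sdiff]
  have hin : ∑ x ∈ S.toFinset, (G.neighborFinset x ∩ S.toFinset).card
      = 2 * (G.induce S).edgeFinset.card := by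
    rw [← sum_degrees_eq_twice_card_edges]
    rw [← Finset.sum_attach S.toFinset (fun x => (G.neighborFinset x ∩ S.toFinset).card)]
    apply Finset.sum_nbij' (fun a => (⟨a.1, by have := a.2; rwa [Set.mem_toFinset] at this⟩ : ↥S))
      (fun u => ⟨u.1, by rw [Set.mem_toFinset]; exact u.2⟩)
    · intros; exact Finset.mem_univ _
    · intros; exact Finset.mem_attach _ _
    · intro a _; rfl
    · intro a _; rfl
    · intro a _
      rw [degree_induce]
  have hout : ∑ x ∈ S.toFinset, (G.neighborFinset x \ S.toFinset).card
      = (cut G S).toFinset.card := by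
    rw [cut_finset_eq, Finset.card_biUnion]
    · apply Finset.sum_congr rfl
      intro x _
      rw [Finset.card_image_of_injOn]
      intro y₁ h₁ y₂ h₂ heq
      rw [Sym2.eq_iff] at heq
      rcases heq with ⟨-, h⟩ | ⟨h1, h2⟩
      · exact h
      · rw [← h1, h2]
    · intro x₁ h₁ x₂ h₂ hne
      rw [Function.onFun, Finset.disjoint_left]
      rintro e he₁ he₂
      simp only [Finset.mem_image, Finset.mem_sdiff, mem_neighborFinset,
        Set.mem_toFinset, Finset.mem_coe] at he₁ he₂ h₁ h₂
      obtain ⟨y₁, ⟨-, hy₁⟩, rfl⟩ := he₁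
      obtain ⟨y₂, ⟨-, hy₂⟩, heq⟩ := he₂
      rw [Sym2.eq_iff] at heq
      rcases heq with ⟨h1, -⟩ | ⟨h1, h2⟩
      · exact hne h1.symm
      · exact hy₂ (h2.symm ▸ h₁)
  calc 3 * S.toFinset.card = ∑ x ∈ S.toFinset, G.degree x := hsum.symm
    _ = ∑ x ∈ S.toFinset, ((G.neighborFinset x ∩ S.toFinset).card
        + (G.neighborFinset x \ S.toFinset).card) := Finset.sum_congr rfl (fun x _ => hsplit x)
    _ = 2 * (G.induce S).edgeFinset.card + (cut G S).toFinset.card := by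
        rw [Finset.sum_add_distrib, hin, hout]

private lemma cut_compl (X : Set V) : cut G Xᶜ = cut G X := by
  ext e
  simp only [cut, Set.mem_setOf_eq, Set.mem_compl_iff, not_not]
  constructor
  · rintro ⟨he, x, hx, y, hy, rfl⟩
    exact ⟨he, y, hy, x, hx, Sym2.eq_swap.symm⟩
  · rintro ⟨he, x, hx, y, hy, rfl⟩
    exact ⟨he, y, hy, x, hx, Sym2.eq_swap.symm⟩

end Counting

section Small

private lemma small_graph_edge_bound {W : Type*} [Fintype W] [DecidableEq W] (H : SimpleGraph W)
    [DecidableRel H.Adj]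
    (hdeg : ∀ w, H.degree w ≤ 3)
    (hC3 : ∀ x y z : W, H.Adj x y → H.Adj y z → H.Adj z x → False)
    (hC4 : ∀ x y z w : W, x ≠ z → y ≠ w →
      H.Adj x y → H.Adj y z → H.Adj z w → H.Adj w x → False)
    (hcard : Fintype.card W ≤ 6) :
    H.edgeFinset.card ≤ Fintype.card W := by
  have hhs := H.sum_degrees_eq_twice_card_edges
  by_cases hv : ∃ v, H.degree v = 3
  case neg =>
    push_neg at hv
    have h2 : ∀ w, H.degree w ≤ 2 := fun w => by
      have := hdeg w; have := hv w; omega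
    have : ∑ w : W, H.degree w ≤ ∑ _w : W, 2 := Finset.sum_le_sum (fun w _ => h2 w)
    rw [Finset.sum_const, smul_eq_mul] at this
    rw [hhs] at this
    have : Finset.univ.card = Fintype.card W := rfl
    omega
  case pos =>
    obtain ⟨v, hv3⟩ := hv
    obtain ⟨a, b, c, hab, hac, hbc, hN⟩ := Finset.card_eq_three.mp hv3
    have hAdj : ∀ w, H.Adj v w ↔ w ∈ ({a, b, c} : Finset W) := by
      intro w
      rw [← hN, mem_neighborFinset]
    have ha : H.Adj v a := (hAdj a).mpr (by simp)
    have hb : H.Adj v b := (hAdj b).mpr (by simp)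
    have hc : H.Adj v c := (hAdj c).mpr (by simp)
    have K : ∀ u₁ u₂ d, H.Adj v u₁ → H.Adj v u₂ → u₁ ≠ u₂ →
        H.Adj u₁ d → H.Adj u₂ d → d = v := by
      intro u₁ u₂ d h1 h2 hne h3 h4
      by_contra hdv
      exact hC4 v u₁ d u₂ (fun h => hdv h.symm) hne h1 h3 h4.symm h2.symm
    set A : Finset W := {a, b, c} with hA
    have hvA : v ∉ A := by
      simp only [hA, Finset.mem_insert, Finset.mem_singleton]
      push_neg
      exact ⟨ha.ne, hb.ne, hc.ne⟩
    set S : Finset W := insert v A with hS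
    set D : Finset W := Finset.univ \ S with hD
    have hcardA : A.card = 3 := by
      rw [hA, Finset.card_insert_of_notMem (by simp [hab, hac]),
        Finset.card_insert_of_notMem (by simp [hbc]), Finset.card_singleton]
    have hcardS : S.card = 4 := by
      rw [hS, Finset.card_insert_of_notMem hvA, hcardA]
    have hcardD : D.card = Fintype.card W - 4 := by
      rw [hD, Finset.card_sdiff_of_subset (Finset.subset_univ _), hcardS, Finset.card_univ]
    have hWge4 : 4 ≤ Fintype.card W := by
      calc 4 = S.card := hcardS.symm
      _ ≤ (Finset.univ : Finset W).card := Finset.card_le_card (Finset.subset_univ _)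
      _ = Fintype.card W := rfl
    have hvD : v ∉ D := by simp [hD, hS]
    have hAA : ∀ u₁ u₂, u₁ ∈ A → u₂ ∈ A → u₁ ≠ u₂ → ¬H.Adj u₁ u₂ := by
      intro u₁ u₂ h1 h2 hne hadj
      exact hC3 v u₁ u₂ ((hAdj u₁).mpr h1) hadj ((hAdj u₂).mpr h2).symm
    have hNA : ∀ u ∈ A, H.neighborFinset u ⊆ insert v (H.neighborFinset u ∩ D) := by
      intro u hu w hw
      rw [mem_neighborFinset] at hw
      rw [Finset.mem_insert]
      by_cases hwv : w = v
      · left; exact hwv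
      · right
        rw [Finset.mem_inter, mem_neighborFinset]
        refine ⟨hw, ?_⟩
        rw [hD, Finset.mem_sdiff]
        refine ⟨Finset.mem_univ _, ?_⟩
        rw [hS, Finset.mem_insert]
        push_neg
        refine ⟨hwv, ?_⟩
        intro hwA
        exact hAA u w hu hwA hw.ne hw
    have hdegA : ∀ u ∈ A, H.degree u ≤ 1 + (H.neighborFinset u ∩ D).card := by
      intro u hu
      calc H.degree u = (H.neighborFinset u).card := rfl
      _ ≤ (insert v (H.neighborFinset u ∩ D)).card := Finset.card_le_card (hNA u hu)
      _ ≤ (H.neighborFinset u ∩ D).card + 1 := Finset.card_insert_le _ _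
      _ = 1 + (H.neighborFinset u ∩ D).card := by omega
    have hdisj : ∀ u₁ u₂, u₁ ∈ A → u₂ ∈ A → u₁ ≠ u₂ →
        Disjoint (H.neighborFinset u₁ ∩ D) (H.neighborFinset u₂ ∩ D) := by
      intro u₁ u₂ h1 h2 hne
      rw [Finset.disjoint_left]
      intro d hd1 hd2
      rw [Finset.mem_inter, mem_neighborFinset] at hd1 hd2
      have := K u₁ u₂ d ((hAdj u₁).mpr h1) ((hAdj u₂).mpr h2) hne hd1.1 hd2.1
      rw [this] at hd1
      exact hvD hd1.2
    have hsumA : (H.neighborFinset a ∩ D).card + (H.neighborFinset b ∩ D).card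
        + (H.neighborFinset c ∩ D).card ≤ D.card := by
      have hd12 := hdisj a b (by simp [hA]) (by simp [hA]) hab
      have hd13 := hdisj a c (by simp [hA]) (by simp [hA]) hac
      have hd23 := hdisj b c (by simp [hA]) (by simp [hA]) hbc
      calc (H.neighborFinset a ∩ D).card + (H.neighborFinset b ∩ D).card
          + (H.neighborFinset c ∩ D).card
          = ((H.neighborFinset a ∩ D) ∪ (H.neighborFinset b ∩ D)
            ∪ (H.neighborFinset c ∩ D)).card := by
            rw [Finset.card_union_of_disjoint
              (by rw [Finset.disjoint_union_left]; exact ⟨hd13, hd23⟩),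
              Finset.card_union_of_disjoint hd12]
      _ ≤ D.card := Finset.card_le_card (by
            intro w hw
            simp only [Finset.mem_union, Finset.mem_inter] at hw
            rcases hw with (⟨-, h⟩ | ⟨-, h⟩) | ⟨-, h⟩ <;> exact h)
    have hdegD : ∀ d ∈ D, H.degree d ≤ D.card := by
      intro d hd
      have hdv : d ≠ v := by rintro rfl; exact hvD hd
      have hdA : d ∉ A := by
        intro hdA
        rw [hD, Finset.mem_sdiff, hS] at hd
        exact hd.2 (Finset.mem_insert_of_mem hdA)
      have hsub : H.neighborFinset d ⊆ (D.erase d) ∪ (H.neighborFinset d ∩ A) := by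
        intro w hw
        rw [mem_neighborFinset] at hw
        rw [Finset.mem_union]
        by_cases hwA : w ∈ A
        · right; rw [Finset.mem_inter, mem_neighborFinset]; exact ⟨hw, hwA⟩
        · left
          rw [Finset.mem_erase]
          refine ⟨fun h => H.irrefl (h ▸ hw), ?_⟩
          rw [hD, Finset.mem_sdiff]
          refine ⟨Finset.mem_univ _, ?_⟩
          rw [hS, Finset.mem_insert]
          push_neg
          refine ⟨?_, hwA⟩
          rintro rfl
          exact hdA ((hAdj d).mp hw.symm)
      have hNdA : (H.neighborFinset d ∩ A).card ≤ 1 := by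
        by_contra hgt
        push_neg at hgt
        obtain ⟨u₁, hu₁, u₂, hu₂, hne⟩ := Finset.one_lt_card.mp hgt
        rw [Finset.mem_inter, mem_neighborFinset] at hu₁ hu₂
        have := K u₁ u₂ d ((hAdj u₁).mpr hu₁.2) ((hAdj u₂).mpr hu₂.2) hne
          hu₁.1.symm hu₂.1.symm
        exact hdv this
      have hDpos : 1 ≤ D.card := Finset.card_pos.mpr ⟨d, hd⟩
      calc H.degree d = (H.neighborFinset d).card := rfl
      _ ≤ ((D.erase d) ∪ (H.neighborFinset d ∩ A)).card := Finset.card_le_card hsub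
      _ ≤ (D.erase d).card + (H.neighborFinset d ∩ A).card := Finset.card_union_le _ _
      _ ≤ (D.card - 1) + 1 := by
            rw [Finset.card_erase_of_mem hd]
            omega
      _ = D.card := by omega
    have hsplit : ∑ w ∈ D, H.degree w + ∑ w ∈ S, H.degree w = ∑ w : W, H.degree w :=
      Finset.sum_sdiff (Finset.subset_univ S)
    have hsumS : ∑ w ∈ S, H.degree w
        = H.degree v + (H.degree a + (H.degree b + H.degree c)) := by
      rw [hS, Finset.sum_insert hvA, hA,
        Finset.sum_insert (by simp [hab, hac]),
        Finset.sum_insert (by simp [hbc]), Finset.sum_singleton]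
    have hsumSb : ∑ w ∈ S, H.degree w ≤ 3 + (3 + D.card) := by
      rw [hsumS, hv3]
      have hba := hdegA a (by simp [hA])
      have hbb := hdegA b (by simp [hA])
      have hbc' := hdegA c (by simp [hA])
      omega
    have hsumDb : ∑ w ∈ D, H.degree w ≤ D.card * D.card := by
      calc ∑ w ∈ D, H.degree w ≤ ∑ _w ∈ D, D.card := Finset.sum_le_sum (fun w hw => hdegD w hw)
      _ = D.card * D.card := by rw [Finset.sum_const, smul_eq_mul]
    have hDle2 : D.card ≤ 2 := by omega
    have hm : D.card * D.card ≤ 2 * D.card := Nat.mul_le_mul_right _ hDle2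
    omega

end Small

section GirthFacts

private lemma induce_cycle_length {V : Type*} {G : SimpleGraph V} (hgirth : 5 ≤ G.egirth)
    (S : Set V) :
    ∀ (u : ↥S) (w : (G.induce S).Walk u u), w.IsCycle → 5 ≤ w.length := by
  intro u w hw
  have f : G.induce S ↪g G := SimpleGraph.Embedding.induce S
  have hc : (w.map f.toHom).IsCycle :=
    hw.map (show Function.Injective ⇑f.toHom from f.injective)
  have := SimpleGraph.le_egirth.mp hgirth _ _ hc
  rw [SimpleGraph.Walk.length_map] at this
  exact_mod_cast this

private lemma no_C3 {W : Type*} {H : SimpleGraph W}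
    (hlen : ∀ (u : W) (w : H.Walk u u), w.IsCycle → 5 ≤ w.length) :
    ∀ x y z : W, H.Adj x y → H.Adj y z → H.Adj z x → False := by
  intro x y z hxy hyz hzx
  have h1 := hxy.ne
  have h2 := hyz.ne
  have h3 := hzx.ne
  have hcyc : (SimpleGraph.Walk.cons hxy
      (SimpleGraph.Walk.cons hyz (SimpleGraph.Walk.cons hzx SimpleGraph.Walk.nil))).IsCycle := by
    simp [Walk.isCycle_def, Walk.isTrail_def, Sym2.eq_iff, List.nodup_cons, h1, h2, h3,
      h1.symm, h2.symm, h3.symm]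
  have := hlen x _ hcyc
  simp [SimpleGraph.Walk.length_cons] at this

private lemma no_C4 {W : Type*} {H : SimpleGraph W}
    (hlen : ∀ (u : W) (w : H.Walk u u), w.IsCycle → 5 ≤ w.length) :
    ∀ x y z w : W, x ≠ z → y ≠ w →
      H.Adj x y → H.Adj y z → H.Adj z w → H.Adj w x → False := by
  intro x y z w hxz hyw hxy hyz hzw hwx
  have h1 := hxy.ne
  have h2 := hyz.ne
  have h3 := hzw.ne
  have h4 := hwx.ne
  have hcyc : (SimpleGraph.Walk.cons hxy (SimpleGraph.Walk.cons hyz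
      (SimpleGraph.Walk.cons hzw (SimpleGraph.Walk.cons hwx SimpleGraph.Walk.nil)))).IsCycle := by
    simp [Walk.isCycle_def, Walk.isTrail_def, Sym2.eq_iff, List.nodup_cons, h1, h2, h3, h4,
      h1.symm, h2.symm, h3.symm, h4.symm, hxz, hyw, hxz.symm, hyw.symm]
  have := hlen x _ hcyc
  simp [SimpleGraph.Walk.length_cons] at this

private lemma cycle_length_le_card {W : Type*} [Fintype W] {H : SimpleGraph W} {u : W}
    {w : H.Walk u u} (hw : w.IsCycle) : w.length ≤ Fintype.card W := by
  have hnodup : w.support.tail.Nodup := hw.support_nodup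
  have hlen : w.support.tail.length = w.length := by
    have h1 := w.length_support
    have h2 : w.support.length = w.support.tail.length + 1 := by
      cases hs : w.support with
      | nil => exact absurd hs w.support_ne_nil
      | cons a l => simp
    omega
  rw [← hlen]
  exact hnodup.length_le_card

private lemma cycle_edges_toFinset_card {W : Type*} [DecidableEq W] {H : SimpleGraph W} {u : W}
    {w : H.Walk u u} (hw : w.IsCycle) : w.edges.toFinset.card = w.length := by
  rw [List.toFinset_card_of_nodup hw.edges_nodup, Walk.length_edges]

private lemma cycle_edges_toFinset_subset {W : Type*} [Fintype W] [DecidableEq W]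
    {H : SimpleGraph W} [DecidableRel H.Adj] {u : W} (w : H.Walk u u) :
    w.edges.toFinset ⊆ H.edgeFinset := by
  intro e he
  rw [List.mem_toFinset] at he
  rw [mem_edgeFinset]
  exact w.edges_subset_edgeSet he

end GirthFacts

/-- A shore side has at least 7 vertices. -/
private lemma seven {V : Type*} [Fintype V] [DecidableEq V] (G : SimpleGraph V)
    [DecidableRel G.Adj] (hcubic : G.IsRegularOfDegree 3) (hgirth : 5 ≤ G.egirth) (S : Set V)
    (hcut : (cut G S).ncard ≤ 5)
    (hcyc : 2 ≤ (cycleEdgeSets (G.induce S)).ncard) :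
    7 ≤ S.ncard := by
  classical
  by_contra hlt
  push_neg at hlt
  have hlen := induce_cycle_length hgirth S
  obtain ⟨s₁, s₂, hs₁, hs₂, hnei⟩ := (Set.one_lt_ncard_iff (Set.toFinite _)).mp hcyc
  obtain ⟨u₁, c₁, hc₁, rfl⟩ := hs₁
  obtain ⟨u₂, c₂, hc₂, rfl⟩ := hs₂
  have hn : Fintype.card ↥S = S.ncard := by
    rw [Set.ncard_eq_toFinset_card', Set.toFinset_card]
  have h5 : 5 ≤ Fintype.card ↥S := le_trans (hlen _ _ hc₁) (cycle_length_le_card hc₁)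
  have hcnt := cnt G hcubic S
  have hNat : Nat.card (G.induce S).edgeSet = (G.induce S).edgeFinset.card := by
    rw [Nat.card_eq_fintype_card, edgeFinset, Set.toFinset_card]
  have hdeg : ∀ u : ↥S, (G.induce S).degree u ≤ 3 := by
    intro u
    rw [degree_induce]
    calc (G.neighborFinset ↑u ∩ S.toFinset).card ≤ (G.neighborFinset ↑u).card :=
          Finset.card_le_card Finset.inter_subset_left
    _ = 3 := hcubic _
  have hsmall := small_graph_edge_bound (G.induce S) hdeg (no_C3 (hlen)) (no_C4 (hlen))
    (by omega)
  have he5 : (G.induce S).edgeFinset.card = 5 := by omega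
  have hn5 : Fintype.card ↥S = 5 := by omega
  have hclen : ∀ {u : ↥S} (c : (G.induce S).Walk u u), c.IsCycle →
      c.edges.toFinset = (G.induce S).edgeFinset := by
    intro u c hc
    apply Finset.eq_of_subset_of_card_le (cycle_edges_toFinset_subset c)
    rw [he5, cycle_edges_toFinset_card hc]
    exact hlen _ _ hc
  exact hnei (by rw [hclen c₁ hc₁, hclen c₂ hc₂])

/-- A cubic graph of girth at least 5 is theta-connected if and only if it
has no shore, where a shore is a set `X` with `|δ(X)| ≤ 5` such that both `G|X` and
`G \ X` contain at least two distinct cycles. -/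
theorem theta_connected_iff_no_shore {V : Type*} [Fintype V] [DecidableEq V]
    (G : SimpleGraph V) [DecidableRel G.Adj]
    (hcubic : G.IsRegularOfDegree 3) (hgirth : 5 ≤ G.egirth) :
    (∀ X : Set V, 7 ≤ X.ncard → 7 ≤ Xᶜ.ncard → 6 ≤ (cut G X).ncard) ↔
      ¬ ∃ X : Set V, (cut G X).ncard ≤ 5 ∧
        2 ≤ (cycleEdgeSets (G.induce X)).ncard ∧
        2 ≤ (cycleEdgeSets (G.induce Xᶜ)).ncard := by
  classical
  constructor
  · rintro htheta ⟨X, hcut, h1, h2⟩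
    have h7 : 7 ≤ X.ncard := seven G hcubic hgirth X hcut h1
    have hcs : cut G Xᶜ = cut G X := cut_compl G X
    have h7c : 7 ≤ Xᶜ.ncard := seven G hcubic hgirth Xᶜ (by rw [hcs]; exact hcut) h2
    have := htheta X h7 h7c
    omega
  · intro hno X h7 h7c
    by_contra hlt
    push_neg at hlt
    have hcutle : (cut G X).ncard ≤ 5 := by omega
    refine hno ⟨X, hcutle, ?_, ?_⟩
    · apply two_cycles
      have hcnt := cnt G hcubic X
      have hNat : Nat.card (G.induce X).edgeSet = (G.induce X).edgeFinset.card := by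
        rw [Nat.card_eq_fintype_card, edgeFinset, Set.toFinset_card]
      have hn : Fintype.card ↥X = X.ncard := by
        rw [Set.ncard_eq_toFinset_card', Set.toFinset_card]
      omega
    · apply two_cycles
      have hcnt := cnt G hcubic Xᶜ
      have hcs : cut G Xᶜ = cut G X := cut_compl G X
      have hNat : Nat.card (G.induce Xᶜ).edgeSet = (G.induce Xᶜ).edgeFinset.card := by
        rw [Nat.card_eq_fintype_card, edgeFinset, Set.toFinset_card]
      have hn : Fintype.card ↥Xᶜ = Xᶜ.ncard := by
        rw [Set.ncard_eq_toFinset_card', Set.toFinset_card]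
      rw [hcs] at hcnt
      omega
end

section
/- In a cubic graph of girth at least 5, no two distinct pentagons share more than two edges, and consequently each vertex incident to a given edge e belonging to no pentagon lies in at most two pentagons. -/
/-- The set of pentagons of `G`, each recorded by its (5-element) edge set. -/
def pentagonEdgeSets {V : Type*} [DecidableEq V] (G : SimpleGraph V) :
    Set (Finset (Sym2 V)) :=
  {s | ∃ (u : V) (w : G.Walk u u), w.IsCycle ∧ w.length = 5 ∧ w.edges.toFinset = s}

section Aux

open SimpleGraph Walk Finset

variable {V : Type*} [DecidableEq V] {G : SimpleGraph V}

lemma gtri (hg : 5 ≤ G.egirth) {a b c : V} (h1 : G.Adj a b) (h2 : G.Adj b c)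
    (h3 : G.Adj c a) : False := by
  have hw : (Walk.cons h1 (Walk.cons h2 (Walk.cons h3 Walk.nil))).IsCycle := by
    rw [Walk.isCycle_def, Walk.isTrail_def]
    refine ⟨?_, by simp, ?_⟩ <;>
      simp [Sym2.eq_iff, h1.ne, h2.ne, h3.ne, h1.ne', h2.ne', h3.ne'] <;> tauto
  have := SimpleGraph.le_egirth.mp hg _ _ hw
  simp at this
  norm_num at this

lemma gsq (hg : 5 ≤ G.egirth) {a b c d : V} (hac : a ≠ c) (hbd : b ≠ d)
    (h1 : G.Adj a b) (h2 : G.Adj b c) (h3 : G.Adj c d) (h4 : G.Adj d a) : False := by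
  have hw : (Walk.cons h1 (Walk.cons h2 (Walk.cons h3 (Walk.cons h4 Walk.nil)))).IsCycle := by
    rw [Walk.isCycle_def, Walk.isTrail_def]
    refine ⟨?_, by simp, ?_⟩ <;>
      simp [Sym2.eq_iff, h1.ne, h2.ne, h3.ne, h4.ne, h1.ne', h2.ne', h3.ne', h4.ne',
        hac, hbd, hac.symm, hbd.symm] <;> tauto
  have := SimpleGraph.le_egirth.mp hg _ _ hw
  simp at this
  norm_num at this

set_option linter.unusedSectionVars false
set_option maxHeartbeats 1000000

lemma walk5 {p : V} (d : G.Walk p p) (hd : d.IsCycle) (h5 : d.length = 5) :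
    ∃ a b x y : V, ([p, a, b, x, y] : List V).Nodup ∧
      d.edges = [s(p, a), s(a, b), s(b, x), s(x, y), s(y, p)] := by
  cases d with
  | nil => simp at h5
  | cons h1 d =>
  cases d with
  | nil => simp at h5
  | cons h2 d =>
  cases d with
  | nil => simp at h5
  | cons h3 d =>
  cases d with
  | nil => simp at h5
  | cons h4 d =>
  cases d with
  | nil => simp at h5
  | cons h5' d =>
  cases d with
  | nil =>
    refine ⟨_, _, _, _, ?_, rfl⟩
    have := hd.support_nodup
    simp at this ⊢
    tauto
  | cons h6 d => simp at h5

lemma pent_struct {u : V} {c : G.Walk u u} (hc : c.IsCycle) (hl : c.length = 5)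
    {p : V} (hp : p ∈ c.support) :
    ∃ a b x y : V, ([p, a, b, x, y] : List V).Nodup ∧
      c.edges.toFinset = {s(p, a), s(a, b), s(b, x), s(x, y), s(y, p)} := by
  have hperm : (c.rotate p hp).edges.Perm c.edges := (c.rotate_edges p hp).perm
  have hlen : (c.rotate p hp).length = 5 := by
    have := hperm.length_eq
    rwa [Walk.length_edges, Walk.length_edges, hl] at this
  obtain ⟨a, b, x, y, hnd, hE⟩ := walk5 (c.rotate p hp) (hc.rotate hp) hlen
  refine ⟨a, b, x, y, hnd, ?_⟩
  rw [← List.toFinset_eq_of_perm _ _ hperm, hE]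
  simp

lemma edge_at {p a b x y z : V} (hnd : ([p, a, b, x, y] : List V).Nodup)
    (h : s(p, z) ∈ ({s(p, a), s(a, b), s(b, x), s(x, y), s(y, p)} : Finset (Sym2 V))) :
    z = a ∨ z = y := by
  simp only [Finset.mem_insert, Finset.mem_singleton, Sym2.eq_iff] at h
  simp only [List.nodup_cons, List.mem_cons, List.mem_singleton, List.not_mem_nil,
    List.nodup_nil] at hnd
  push_neg at hnd
  tauto

lemma cycle_sec {u : V} {c : G.Walk u u} (hc : c.IsCycle) (hl : c.length = 5) :
    ∀ p a0, s(p, a0) ∈ c.edges.toFinset → ∃ b0, b0 ≠ a0 ∧ s(p, b0) ∈ c.edges.toFinset := by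
  intro p a0 h
  have hp : p ∈ c.support := c.fst_mem_support_of_mem_edges (List.mem_toFinset.mp h)
  obtain ⟨a, b, x, y, hnd, hE⟩ := pent_struct hc hl hp
  rw [hE] at h ⊢
  simp only [List.nodup_cons, List.mem_cons, List.mem_singleton, List.not_mem_nil,
    List.nodup_nil] at hnd
  push_neg at hnd
  rcases edge_at (by simp; tauto) h with rfl | rfl
  · exact ⟨y, by tauto, by rw [Sym2.eq_swap]; simp⟩
  · exact ⟨a, by tauto, by simp⟩

lemma card5 {α : Type*} [DecidableEq α] {a b c d e : α} (h1 : a ≠ b) (h2 : a ≠ c)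
    (h3 : a ≠ d) (h4 : a ≠ e) (h5 : b ≠ c) (h6 : b ≠ d) (h7 : b ≠ e) (h8 : c ≠ d)
    (h9 : c ≠ e) (h10 : d ≠ e) : ({a, b, c, d, e} : Finset α).card = 5 := by
  rw [Finset.card_insert_of_notMem (by simp; tauto),
    Finset.card_insert_of_notMem (by simp; tauto),
    Finset.card_insert_of_notMem (by simp; tauto),
    Finset.card_insert_of_notMem (by simp; tauto), Finset.card_singleton]

lemma helperA (hg : 5 ≤ G.egirth) {v0 v1 v2 v3 v4 : V} {E2 : Finset (Sym2 V)}
    (m1 : s(v0, v1) ∈ E2) (m2 : s(v1, v2) ∈ E2) (m3 : s(v2, v3) ∈ E2)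
    (hnd : ([v0, v1, v2, v3, v4] : List V).Nodup)
    (a01 : G.Adj v0 v1) (a12 : G.Adj v1 v2) (a23 : G.Adj v2 v3) (a34 : G.Adj v3 v4)
    (a40 : G.Adj v4 v0)
    (hsub : ∀ z ∈ E2, z ∈ G.edgeSet) (hcard : E2.card = 5)
    (hsec : ∀ p a, s(p, a) ∈ E2 → ∃ b, b ≠ a ∧ s(p, b) ∈ E2)
    (hne : ({s(v0, v1), s(v1, v2), s(v2, v3), s(v3, v4), s(v4, v0)} : Finset (Sym2 V)) ≠ E2) :
    False := by
  simp only [List.nodup_cons, List.mem_cons, List.mem_singleton, List.not_mem_nil,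
    List.nodup_nil, not_false_iff, and_true, or_false] at hnd
  push_neg at hnd
  obtain ⟨⟨n01, n02, n03, n04⟩, ⟨n12, n13, n14⟩, ⟨n23, n24⟩, n34⟩ := hnd
  have hadj : ∀ p q : V, s(p, q) ∈ E2 → G.Adj p q := fun p q h => hsub _ h
  obtain ⟨x, hxne, hx⟩ := hsec v3 v2 (by rw [Sym2.eq_swap]; exact m3)
  have hx3 : x ≠ v3 := fun h => ((hadj _ _ hx).ne' h)
  have hx1 : x ≠ v1 := by rintro rfl; exact gtri hg a12 a23 (hadj _ _ hx)
  have hx0 : x ≠ v0 := by rintro rfl; exact gsq hg n02 n13 a01 a12 a23 (hadj _ _ hx)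
  obtain ⟨y, hyne, hy⟩ := hsec v0 v1 m1
  have hy0 : y ≠ v0 := fun h => ((hadj _ _ hy).ne' h)
  have hy2 : y ≠ v2 := by rintro rfl; exact gtri hg a01 a12 (hadj _ _ hy).symm
  have hy3 : y ≠ v3 := by rintro rfl; exact gsq hg n02 n13 a01 a12 a23 (hadj _ _ hy).symm
  have hE2 : E2 = {s(v0, v1), s(v1, v2), s(v2, v3), s(v3, x), s(v0, y)} := by
    symm
    apply Finset.eq_of_subset_of_card_le
    · intro z hz
      simp only [Finset.mem_insert, Finset.mem_singleton] at hz
      rcases hz with rfl | rfl | rfl | rfl | rfl <;> assumption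
    · rw [hcard]
      rw [card5 (a := s(v0,v1)) (b := s(v1,v2)) (c := s(v2,v3)) (d := s(v3,x)) (e := s(v0,y))]
        <;> simp only [ne_eq, Sym2.eq_iff] <;> tauto
  obtain ⟨w, hwne, hw⟩ := hsec x v3 (by rw [Sym2.eq_swap]; exact hx)
  have hxy : x = y := by
    rw [hE2] at hw
    simp only [Finset.mem_insert, Finset.mem_singleton, Sym2.eq_iff] at hw
    tauto
  subst hxy
  by_cases hx4 : x = v4
  · subst hx4
    exact hne (by rw [hE2, show s(x, v0) = s(v0, x) from Sym2.eq_swap])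
  · exact gsq hg n03.symm (Ne.symm hx4) a34 a40 (hadj _ _ hy) (hadj _ _ hx).symm

lemma helperB (hg : 5 ≤ G.egirth) {v0 v1 v2 v3 v4 : V} {E2 : Finset (Sym2 V)}
    (m1 : s(v0, v1) ∈ E2) (m2 : s(v1, v2) ∈ E2) (m4 : s(v3, v4) ∈ E2)
    (hnd : ([v0, v1, v2, v3, v4] : List V).Nodup)
    (a01 : G.Adj v0 v1) (a12 : G.Adj v1 v2) (a23 : G.Adj v2 v3) (a34 : G.Adj v3 v4)
    (a40 : G.Adj v4 v0)
    (hsub : ∀ z ∈ E2, z ∈ G.edgeSet) (hcard : E2.card = 5)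
    (hsec : ∀ p a, s(p, a) ∈ E2 → ∃ b, b ≠ a ∧ s(p, b) ∈ E2)
    (hne : ({s(v0, v1), s(v1, v2), s(v2, v3), s(v3, v4), s(v4, v0)} : Finset (Sym2 V)) ≠ E2) :
    False := by
  simp only [List.nodup_cons, List.mem_cons, List.mem_singleton, List.not_mem_nil,
    List.nodup_nil, not_false_iff, and_true, or_false] at hnd
  push_neg at hnd
  obtain ⟨⟨n01, n02, n03, n04⟩, ⟨n12, n13, n14⟩, ⟨n23, n24⟩, n34⟩ := hnd
  have hadj : ∀ p q : V, s(p, q) ∈ E2 → G.Adj p q := fun p q h => hsub _ h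
  obtain ⟨x, hxne, hx⟩ := hsec v0 v1 m1
  have hx0 : x ≠ v0 := fun h => ((hadj _ _ hx).ne' h)
  have hx2 : x ≠ v2 := by rintro rfl; exact gtri hg a01 a12 (hadj _ _ hx).symm
  obtain ⟨y, hyne, hy⟩ := hsec v2 v1 (by rw [Sym2.eq_swap]; exact m2)
  have hy2 : y ≠ v2 := fun h => ((hadj _ _ hy).ne' h)
  have hy0 : y ≠ v0 := by rintro rfl; exact gtri hg a01 a12 (hadj _ _ hy)
  have hE2 : E2 = {s(v0, v1), s(v1, v2), s(v3, v4), s(v0, x), s(v2, y)} := by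
    symm
    apply Finset.eq_of_subset_of_card_le
    · intro z hz
      simp only [Finset.mem_insert, Finset.mem_singleton] at hz
      rcases hz with rfl | rfl | rfl | rfl | rfl <;> assumption
    · rw [hcard]
      rw [card5 (a := s(v0,v1)) (b := s(v1,v2)) (c := s(v3,v4)) (d := s(v0,x)) (e := s(v2,y))]
        <;> simp only [ne_eq, Sym2.eq_iff] <;> tauto
  obtain ⟨t, htne, ht⟩ := hsec v3 v4 m4
  have d3 : x = v3 ∨ y = v3 := by
    rw [hE2] at ht
    simp only [Finset.mem_insert, Finset.mem_singleton, Sym2.eq_iff] at ht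
    rcases ht with (⟨h,-⟩|⟨h,-⟩)|(⟨h,-⟩|⟨h,-⟩)|(⟨-,h⟩|⟨h,-⟩)|(⟨h,-⟩|⟨h,-⟩)|(⟨h,-⟩|⟨h,-⟩)
    · exact (n03 h.symm).elim
    · exact (n13 h.symm).elim
    · exact (n13 h.symm).elim
    · exact (n23 h.symm).elim
    · exact (htne h).elim
    · exact (n34 h).elim
    · exact (n03 h.symm).elim
    · exact Or.inl h.symm
    · exact (n23 h.symm).elim
    · exact Or.inr h.symm
  obtain ⟨s', hsne, hs⟩ := hsec v4 v3 (by rw [Sym2.eq_swap]; exact m4)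
  have d4 : x = v4 ∨ y = v4 := by
    rw [hE2] at hs
    simp only [Finset.mem_insert, Finset.mem_singleton, Sym2.eq_iff] at hs
    rcases hs with (⟨h,-⟩|⟨h,-⟩)|(⟨h,-⟩|⟨h,-⟩)|(⟨h,-⟩|⟨-,h⟩)|(⟨h,-⟩|⟨h,-⟩)|(⟨h,-⟩|⟨h,-⟩)
    · exact (n04 h.symm).elim
    · exact (n14 h.symm).elim
    · exact (n14 h.symm).elim
    · exact (n24 h.symm).elim
    · exact (n34 h.symm).elim
    · exact (hsne h).elim
    · exact (n04 h.symm).elim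
    · exact Or.inl h.symm
    · exact (n24 h.symm).elim
    · exact Or.inr h.symm
  have A1 : G.Adj v0 x := hadj _ _ hx
  have A2 : G.Adj v2 y := hadj _ _ hy
  clear ht hs htne hsne hadj hsec hcard hsub hx hy m1 m2 m4
  rcases d3 with h3 | h3
  · rcases d4 with h4 | h4
    · exact n34 (h3.symm.trans h4)
    · exact gsq hg n02.symm n34 a23 (h3 ▸ A1).symm a40.symm (h4 ▸ A2).symm
  · rcases d4 with h4 | h4
    · refine hne ?_
      rw [hE2, h3, h4, show s(v4, v0) = s(v0, v4) from Sym2.eq_swap]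
      ext z
      simp only [Finset.mem_insert, Finset.mem_singleton]
      tauto
    · exact n34 (h3.symm.trans h4)


lemma mknd {p q r s t : V} (h1 : p ≠ q) (h2 : p ≠ r) (h3 : p ≠ s) (h4 : p ≠ t)
    (h5 : q ≠ r) (h6 : q ≠ s) (h7 : q ≠ t) (h8 : r ≠ s) (h9 : r ≠ t) (h10 : s ≠ t) :
    ([p, q, r, s, t] : List V).Nodup := by
  simp only [List.nodup_cons, List.mem_cons, List.mem_singleton, List.not_mem_nil,
    List.nodup_nil, not_false_iff, and_true, or_false]
  push_neg
  tauto

lemma rot5 {α : Type*} [DecidableEq α] (A B C D E : α) :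
    ({B, C, D, E, A} : Finset α) = {A, B, C, D, E} := by
  ext z; simp only [Finset.mem_insert, Finset.mem_singleton]; tauto

lemma perm123 {α : Type*} [DecidableEq α] (A B C D E : α) :
    ({A, B, C, D, E} : Finset α) = {A, B, C, D, E} := rfl

lemma perm124 {α : Type*} [DecidableEq α] (A B C D E : α) :
    ({A, B, D, C, E} : Finset α) = {A, B, C, D, E} := by
  ext z; simp only [Finset.mem_insert, Finset.mem_singleton]; tauto

lemma perm125 {α : Type*} [DecidableEq α] (A B C D E : α) :
    ({A, B, E, C, D} : Finset α) = {A, B, C, D, E} := by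
  ext z; simp only [Finset.mem_insert, Finset.mem_singleton]; tauto

lemma perm134 {α : Type*} [DecidableEq α] (A B C D E : α) :
    ({A, C, D, B, E} : Finset α) = {A, B, C, D, E} := by
  ext z; simp only [Finset.mem_insert, Finset.mem_singleton]; tauto

lemma perm135 {α : Type*} [DecidableEq α] (A B C D E : α) :
    ({A, C, E, B, D} : Finset α) = {A, B, C, D, E} := by
  ext z; simp only [Finset.mem_insert, Finset.mem_singleton]; tauto

lemma perm145 {α : Type*} [DecidableEq α] (A B C D E : α) :
    ({A, D, E, B, C} : Finset α) = {A, B, C, D, E} := by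
  ext z; simp only [Finset.mem_insert, Finset.mem_singleton]; tauto

lemma perm234 {α : Type*} [DecidableEq α] (A B C D E : α) :
    ({B, C, D, A, E} : Finset α) = {A, B, C, D, E} := by
  ext z; simp only [Finset.mem_insert, Finset.mem_singleton]; tauto

lemma perm235 {α : Type*} [DecidableEq α] (A B C D E : α) :
    ({B, C, E, A, D} : Finset α) = {A, B, C, D, E} := by
  ext z; simp only [Finset.mem_insert, Finset.mem_singleton]; tauto

lemma perm245 {α : Type*} [DecidableEq α] (A B C D E : α) :
    ({B, D, E, A, C} : Finset α) = {A, B, C, D, E} := by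
  ext z; simp only [Finset.mem_insert, Finset.mem_singleton]; tauto

lemma perm345 {α : Type*} [DecidableEq α] (A B C D E : α) :
    ({C, D, E, A, B} : Finset α) = {A, B, C, D, E} := by
  ext z; simp only [Finset.mem_insert, Finset.mem_singleton]; tauto

lemma part1 (hg : 5 ≤ G.egirth) {u v : V} (c₁ : G.Walk u u) (c₂ : G.Walk v v)
    (h1c : c₁.IsCycle) (h2c : c₂.IsCycle) (h1l : c₁.length = 5) (h2l : c₂.length = 5)
    (hne : c₁.edges.toFinset ≠ c₂.edges.toFinset) :
    (c₁.edges.toFinset ∩ c₂.edges.toFinset).card ≤ 2 := by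
  by_contra hgt
  push_neg at hgt
  obtain ⟨a, b, x, y, hnd, hE1⟩ := pent_struct h1c h1l c₁.start_mem_support
  set E2 := c₂.edges.toFinset with hE2def
  have hsub : ∀ z ∈ E2, z ∈ G.edgeSet := fun z hz =>
    c₂.edges_subset_edgeSet (List.mem_toFinset.mp hz)
  have hcard2 : E2.card = 5 := by
    rw [hE2def, List.toFinset_card_of_nodup h2c.isCircuit.isTrail.edges_nodup,
      Walk.length_edges, h2l]
  have hsec2 := cycle_sec h2c h2l
  have hneE : ({s(u, a), s(a, b), s(b, x), s(x, y), s(y, u)} : Finset (Sym2 V)) ≠ E2 := by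
    rw [← hE1]; exact hne
  have hsub1 : ∀ z ∈ ({s(u, a), s(a, b), s(b, x), s(x, y), s(y, u)} : Finset (Sym2 V)),
      z ∈ G.edgeSet := by
    rw [← hE1]; exact fun z hz => c₁.edges_subset_edgeSet (List.mem_toFinset.mp hz)
  have a01 : G.Adj u a := hsub1 s(u, a) (by simp)
  have a12 : G.Adj a b := hsub1 s(a, b) (by simp)
  have a23 : G.Adj b x := hsub1 s(b, x) (by simp)
  have a34 : G.Adj x y := hsub1 s(x, y) (by simp)
  have a40 : G.Adj y u := hsub1 s(y, u) (by simp)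
  have hnd' := hnd
  simp only [List.nodup_cons, List.mem_cons, List.mem_singleton, List.not_mem_nil,
    List.nodup_nil, not_false_iff, and_true, or_false] at hnd'
  push_neg at hnd'
  obtain ⟨⟨n01, n02, n03, n04⟩, ⟨n12, n13, n14⟩, ⟨n23, n24⟩, n34⟩ := hnd'
  have hnd1 : ([a, b, x, y, u] : List V).Nodup :=
    mknd n12 n13 n14 n01.symm n23 n24 n02.symm n34 n03.symm n04.symm
  have hnd2 : ([b, x, y, u, a] : List V).Nodup :=
    mknd n23 n24 n02.symm n12.symm n34 n03.symm n13.symm n04.symm n14.symm n01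
  have hnd3 : ([x, y, u, a, b] : List V).Nodup :=
    mknd n34 n03.symm n13.symm n23.symm n04.symm n14.symm n24.symm n01 n02 n12
  have hnd4 : ([y, u, a, b, x] : List V).Nodup :=
    mknd n04.symm n14.symm n24.symm n34.symm n01 n02 n03 n12 n13 n23
  have rot1 : ({s(a, b), s(b, x), s(x, y), s(y, u), s(u, a)} : Finset (Sym2 V)) ≠ E2 := by
    rw [rot5 s(u, a) s(a, b) s(b, x) s(x, y) s(y, u)]; exact hneE
  have rot2 : ({s(b, x), s(x, y), s(y, u), s(u, a), s(a, b)} : Finset (Sym2 V)) ≠ E2 := by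
    rw [rot5 s(a, b) s(b, x) s(x, y) s(y, u) s(u, a),
      rot5 s(u, a) s(a, b) s(b, x) s(x, y) s(y, u)]; exact hneE
  have rot3 : ({s(x, y), s(y, u), s(u, a), s(a, b), s(b, x)} : Finset (Sym2 V)) ≠ E2 := by
    rw [rot5 s(b, x) s(x, y) s(y, u) s(u, a) s(a, b),
      rot5 s(a, b) s(b, x) s(x, y) s(y, u) s(u, a),
      rot5 s(u, a) s(a, b) s(b, x) s(x, y) s(y, u)]; exact hneE
  have rot4 : ({s(y, u), s(u, a), s(a, b), s(b, x), s(x, y)} : Finset (Sym2 V)) ≠ E2 := by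
    rw [rot5 s(x, y) s(y, u) s(u, a) s(a, b) s(b, x),
      rot5 s(b, x) s(x, y) s(y, u) s(u, a) s(a, b),
      rot5 s(a, b) s(b, x) s(x, y) s(y, u) s(u, a),
      rot5 s(u, a) s(a, b) s(b, x) s(x, y) s(y, u)]; exact hneE
  have A0 : s(u, a) ∈ E2 → s(a, b) ∈ E2 → s(b, x) ∈ E2 → False := fun p q r =>
    helperA hg p q r hnd a01 a12 a23 a34 a40 hsub hcard2 hsec2 hneE
  have A1 : s(a, b) ∈ E2 → s(b, x) ∈ E2 → s(x, y) ∈ E2 → False := fun p q r =>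
    helperA hg p q r hnd1 a12 a23 a34 a40 a01 hsub hcard2 hsec2 rot1
  have A2 : s(b, x) ∈ E2 → s(x, y) ∈ E2 → s(y, u) ∈ E2 → False := fun p q r =>
    helperA hg p q r hnd2 a23 a34 a40 a01 a12 hsub hcard2 hsec2 rot2
  have A3 : s(x, y) ∈ E2 → s(y, u) ∈ E2 → s(u, a) ∈ E2 → False := fun p q r =>
    helperA hg p q r hnd3 a34 a40 a01 a12 a23 hsub hcard2 hsec2 rot3
  have A4 : s(y, u) ∈ E2 → s(u, a) ∈ E2 → s(a, b) ∈ E2 → False := fun p q r =>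
    helperA hg p q r hnd4 a40 a01 a12 a23 a34 hsub hcard2 hsec2 rot4
  have B0 : s(u, a) ∈ E2 → s(a, b) ∈ E2 → s(x, y) ∈ E2 → False := fun p q r =>
    helperB hg p q r hnd a01 a12 a23 a34 a40 hsub hcard2 hsec2 hneE
  have B1 : s(a, b) ∈ E2 → s(b, x) ∈ E2 → s(y, u) ∈ E2 → False := fun p q r =>
    helperB hg p q r hnd1 a12 a23 a34 a40 a01 hsub hcard2 hsec2 rot1
  have B2 : s(b, x) ∈ E2 → s(x, y) ∈ E2 → s(u, a) ∈ E2 → False := fun p q r =>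
    helperB hg p q r hnd2 a23 a34 a40 a01 a12 hsub hcard2 hsec2 rot2
  have B3 : s(x, y) ∈ E2 → s(y, u) ∈ E2 → s(a, b) ∈ E2 → False := fun p q r =>
    helperB hg p q r hnd3 a34 a40 a01 a12 a23 hsub hcard2 hsec2 rot3
  have B4 : s(y, u) ∈ E2 → s(u, a) ∈ E2 → s(b, x) ∈ E2 → False := fun p q r =>
    helperB hg p q r hnd4 a40 a01 a12 a23 a34 hsub hcard2 hsec2 rot4
  have BAD : ∀ f1 f2 f3 g1 g2 : Sym2 V, f1 ∉ E2 → f2 ∉ E2 → f3 ∉ E2 →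
      ({f1, f2, f3, g1, g2} : Finset (Sym2 V)) =
        {s(u, a), s(a, b), s(b, x), s(x, y), s(y, u)} → False := by
    intro f1 f2 f3 g1 g2 hn1 hn2 hn3 hset
    have hssub : c₁.edges.toFinset ∩ E2 ⊆ {g1, g2} := by
      intro z hz
      rw [Finset.mem_inter, hE1, ← hset] at hz
      obtain ⟨hz1, hz2⟩ := hz
      simp only [Finset.mem_insert, Finset.mem_singleton] at hz1 ⊢
      rcases hz1 with rfl | rfl | rfl | rfl | rfl
      exacts [(hn1 hz2).elim, (hn2 hz2).elim, (hn3 hz2).elim, Or.inl rfl, Or.inr rfl]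
    have h2' := Finset.card_le_card hssub
    have h2'' : ({g1, g2} : Finset (Sym2 V)).card ≤ 2 :=
      (Finset.card_insert_le _ _).trans (by simp)
    omega
  have BAD123 : s(u, a) ∉ E2 → s(a, b) ∉ E2 → s(b, x) ∉ E2 → False := fun p q r =>
    BAD _ _ _ s(x, y) s(y, u) p q r (perm123 _ _ _ _ _)
  have BAD124 : s(u, a) ∉ E2 → s(a, b) ∉ E2 → s(x, y) ∉ E2 → False := fun p q r =>
    BAD _ _ _ s(b, x) s(y, u) p q r (perm124 _ _ _ _ _)
  have BAD125 : s(u, a) ∉ E2 → s(a, b) ∉ E2 → s(y, u) ∉ E2 → False := fun p q r =>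
    BAD _ _ _ s(b, x) s(x, y) p q r (perm125 _ _ _ _ _)
  have BAD134 : s(u, a) ∉ E2 → s(b, x) ∉ E2 → s(x, y) ∉ E2 → False := fun p q r =>
    BAD _ _ _ s(a, b) s(y, u) p q r (perm134 _ _ _ _ _)
  have BAD135 : s(u, a) ∉ E2 → s(b, x) ∉ E2 → s(y, u) ∉ E2 → False := fun p q r =>
    BAD _ _ _ s(a, b) s(x, y) p q r (perm135 _ _ _ _ _)
  have BAD145 : s(u, a) ∉ E2 → s(x, y) ∉ E2 → s(y, u) ∉ E2 → False := fun p q r =>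
    BAD _ _ _ s(a, b) s(b, x) p q r (perm145 _ _ _ _ _)
  have BAD234 : s(a, b) ∉ E2 → s(b, x) ∉ E2 → s(x, y) ∉ E2 → False := fun p q r =>
    BAD _ _ _ s(u, a) s(y, u) p q r (perm234 _ _ _ _ _)
  have BAD235 : s(a, b) ∉ E2 → s(b, x) ∉ E2 → s(y, u) ∉ E2 → False := fun p q r =>
    BAD _ _ _ s(u, a) s(x, y) p q r (perm235 _ _ _ _ _)
  have BAD245 : s(a, b) ∉ E2 → s(x, y) ∉ E2 → s(y, u) ∉ E2 → False := fun p q r =>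
    BAD _ _ _ s(u, a) s(b, x) p q r (perm245 _ _ _ _ _)
  have BAD345 : s(b, x) ∉ E2 → s(x, y) ∉ E2 → s(y, u) ∉ E2 → False := fun p q r =>
    BAD _ _ _ s(u, a) s(a, b) p q r (perm345 _ _ _ _ _)
  by_cases h1 : s(u, a) ∈ E2 <;> by_cases h2 : s(a, b) ∈ E2 <;>
    by_cases h3 : s(b, x) ∈ E2 <;> by_cases h4 : s(x, y) ∈ E2 <;>
    by_cases h5 : s(y, u) ∈ E2 <;>
    first
    | exact A0 h1 h2 h3
    | exact A1 h2 h3 h4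
    | exact A2 h3 h4 h5
    | exact A3 h4 h5 h1
    | exact A4 h5 h1 h2
    | exact B0 h1 h2 h4
    | exact B1 h2 h3 h5
    | exact B2 h3 h4 h1
    | exact B3 h4 h5 h2
    | exact B4 h5 h1 h3
    | exact BAD123 h1 h2 h3
    | exact BAD124 h1 h2 h4
    | exact BAD125 h1 h2 h5
    | exact BAD134 h1 h3 h4
    | exact BAD135 h1 h3 h5
    | exact BAD145 h1 h4 h5
    | exact BAD234 h2 h3 h4
    | exact BAD235 h2 h3 h5
    | exact BAD245 h2 h4 h5
    | exact BAD345 h3 h4 h5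

lemma card3 {α : Type*} [DecidableEq α] {a b c : α} (h1 : a ≠ b) (h2 : a ≠ c) (h3 : b ≠ c) :
    ({a, b, c} : Finset α).card = 3 := by
  rw [Finset.card_insert_of_notMem (by simp; tauto),
    Finset.card_insert_of_notMem (by simp; tauto), Finset.card_singleton]

lemma card4 {α : Type*} [DecidableEq α] {a b c d : α} (h1 : a ≠ b) (h2 : a ≠ c) (h3 : a ≠ d)
    (h4 : b ≠ c) (h5 : b ≠ d) (h6 : c ≠ d) : ({a, b, c, d} : Finset α).card = 4 := by
  rw [Finset.card_insert_of_notMem (by simp; tauto),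
    Finset.card_insert_of_notMem (by simp; tauto),
    Finset.card_insert_of_notMem (by simp; tauto), Finset.card_singleton]

lemma orient_struct {v a b x y a' : V} {s : Finset (Sym2 V)}
    (hnd : ([v, a, b, x, y] : List V).Nodup)
    (hs : s = {s(v, a), s(a, b), s(b, x), s(x, y), s(y, v)})
    (h : a' = a ∨ a' = y) :
    ∃ b' x' y' : V, ([v, a', b', x', y'] : List V).Nodup ∧
      s = {s(v, a'), s(a', b'), s(b', x'), s(x', y'), s(y', v)} := by
  rcases h with rfl | rfl
  · exact ⟨b, x, y, hnd, hs⟩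
  · refine ⟨x, b, a, ?_, ?_⟩
    · simp only [List.nodup_cons, List.mem_cons, List.mem_singleton, List.not_mem_nil,
        List.nodup_nil, not_false_iff, and_true, or_false] at hnd ⊢
      push_neg at hnd ⊢
      tauto
    · rw [hs, show s(v, a) = s(a, v) from Sym2.eq_swap, show s(a, b) = s(b, a) from Sym2.eq_swap,
        show s(b, x) = s(x, b) from Sym2.eq_swap, show s(x, a') = s(a', x) from Sym2.eq_swap,
        show s(a', v) = s(v, a') from Sym2.eq_swap]
      ext z
      simp only [Finset.mem_insert, Finset.mem_singleton]
      tauto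

lemma part2 [Fintype V] [DecidableRel G.Adj] (hcubic : G.IsRegularOfDegree 3)
    (hg : 5 ≤ G.egirth) :
    ∀ e ∈ G.edgeSet, (∀ s ∈ pentagonEdgeSets G, e ∉ s) →
      ∀ v ∈ e, ({s ∈ pentagonEdgeSets G | ∃ e' ∈ s, v ∈ e'}).ncard ≤ 2 := by
  intro e he hno v hv
  obtain ⟨n0, rfl⟩ := Sym2.mem_iff_exists.mp hv
  have hadj0 : G.Adj v n0 := G.mem_edgeSet.mp he
  set S := {s ∈ pentagonEdgeSets G | ∃ e' ∈ s, v ∈ e'} with hSdef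
  by_contra hc
  push_neg at hc
  have mnf : ∀ p q : V, G.Adj p q → q ∈ G.neighborFinset p := by
    intro p q h; rw [SimpleGraph.mem_neighborFinset]; exact h
  have key : ∀ s ∈ S, ∃ a b x y : V, ([v, a, b, x, y] : List V).Nodup ∧
      s = {s(v, a), s(a, b), s(b, x), s(x, y), s(y, v)} ∧ (∀ z ∈ s, z ∈ G.edgeSet) := by
    rintro s ⟨⟨u0, w0, hcyc, hlen, rfl⟩, e', he', hve'⟩
    obtain ⟨m, rfl⟩ := Sym2.mem_iff_exists.mp hve'
    have hvs : v ∈ w0.support := w0.fst_mem_support_of_mem_edges (List.mem_toFinset.mp he')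
    obtain ⟨a, b, x, y, hnd, hE⟩ := pent_struct hcyc hlen hvs
    exact ⟨a, b, x, y, hnd, hE, fun z hz => w0.edges_subset_edgeSet (List.mem_toFinset.mp hz)⟩
  obtain ⟨t, hts, ht3⟩ := Set.exists_subset_card_eq hc
  rw [Set.ncard_eq_three] at ht3
  obtain ⟨s1, s2, s3, h12, h13, h23, rfl⟩ := ht3
  have hs1 : s1 ∈ S := hts (by simp)
  have hs2 : s2 ∈ S := hts (by simp)
  have hs3 : s3 ∈ S := hts (by simp)
  obtain ⟨a1, b0, x0, y1, hnd1, hEq1, hsubE1⟩ := key s1 hs1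
  have hnd1' := hnd1
  simp only [List.nodup_cons, List.mem_cons, List.mem_singleton, List.not_mem_nil,
    List.nodup_nil, not_false_iff, and_true, or_false] at hnd1'
  push_neg at hnd1'
  obtain ⟨⟨e01, e02, e03, e04⟩, ⟨e12, e13, e14⟩, -, -⟩ := hnd1'
  have hm1 : s(v, a1) ∈ s1 := by rw [hEq1]; simp
  have hm2 : s(v, y1) ∈ s1 := by
    rw [show s(v, y1) = s(y1, v) from Sym2.eq_swap, hEq1]; simp
  have hA1 : G.Adj v a1 := G.mem_edgeSet.mp (hsubE1 _ hm1)
  have hA2 : G.Adj v y1 := G.mem_edgeSet.mp (hsubE1 _ hm2)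
  have han0 : a1 ≠ n0 := fun h => hno s1 hs1.1 (h ▸ hm1)
  have hyn0 : y1 ≠ n0 := fun h => hno s1 hs1.1 (h ▸ hm2)
  have hnbr : G.neighborFinset v = {n0, a1, y1} := by
    symm
    apply Finset.eq_of_subset_of_card_le
    · intro z hz
      simp only [Finset.mem_insert, Finset.mem_singleton] at hz
      rcases hz with rfl | rfl | rfl
      exacts [mnf _ _ hadj0, mnf _ _ hA1, mnf _ _ hA2]
    · rw [card3 han0.symm hyn0.symm e14, SimpleGraph.card_neighborFinset_eq_degree, hcubic v]
  have key2 : ∀ s ∈ S, ∃ b' x' : V, ([v, a1, b', x', y1] : List V).Nodup ∧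
      s = {s(v, a1), s(a1, b'), s(b', x'), s(x', y1), s(y1, v)} ∧
      (∀ z ∈ s, z ∈ G.edgeSet) := by
    intro s hs
    obtain ⟨a, b, x, y, hnd, hEq, hsubE⟩ := key s hs
    have hnd'' := hnd
    simp only [List.nodup_cons, List.mem_cons, List.mem_singleton, List.not_mem_nil,
      List.nodup_nil, not_false_iff, and_true, or_false] at hnd''
    push_neg at hnd''
    obtain ⟨⟨f01, f02, f03, f04⟩, ⟨f12, f13, f14⟩, -, -⟩ := hnd''
    have hm1' : s(v, a) ∈ s := by rw [hEq]; simp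
    have hm2' : s(v, y) ∈ s := by
      rw [show s(v, y) = s(y, v) from Sym2.eq_swap, hEq]; simp
    have hA : G.Adj v a := G.mem_edgeSet.mp (hsubE _ hm1')
    have hAy : G.Adj v y := G.mem_edgeSet.mp (hsubE _ hm2')
    have han : a ≠ n0 := fun h => hno s hs.1 (h ▸ hm1')
    have hyn : y ≠ n0 := fun h => hno s hs.1 (h ▸ hm2')
    have haN : a = a1 ∨ a = y1 := by
      have hmem : a ∈ G.neighborFinset v := mnf _ _ hA
      rw [hnbr] at hmem
      simp only [Finset.mem_insert, Finset.mem_singleton] at hmem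
      rcases hmem with rfl | h | h
      exacts [(han rfl).elim, Or.inl h, Or.inr h]
    have hyN : y = a1 ∨ y = y1 := by
      have hmem : y ∈ G.neighborFinset v := mnf _ _ hAy
      rw [hnbr] at hmem
      simp only [Finset.mem_insert, Finset.mem_singleton] at hmem
      rcases hmem with rfl | h | h
      exacts [(hyn rfl).elim, Or.inl h, Or.inr h]
    have hOr : a1 = a ∨ a1 = y := by
      rcases haN with h1 | h1
      · exact Or.inl h1.symm
      · rcases hyN with h2 | h2
        · exact Or.inr h2.symm
        · exact (f14 (h1.trans h2.symm)).elim
    obtain ⟨b', x', y', hnd', hEq'⟩ := orient_struct hnd hEq hOr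
    have hnd''' := hnd'
    simp only [List.nodup_cons, List.mem_cons, List.mem_singleton, List.not_mem_nil,
      List.nodup_nil, not_false_iff, and_true, or_false] at hnd'''
    push_neg at hnd'''
    obtain ⟨⟨g01, g02, g03, g04⟩, ⟨g12, g13, g14⟩, -, -⟩ := hnd'''
    have hm2'' : s(v, y') ∈ s := by
      rw [show s(v, y') = s(y', v) from Sym2.eq_swap, hEq']; simp
    have hAy' : G.Adj v y' := G.mem_edgeSet.mp (hsubE _ hm2'')
    have hy'n : y' ≠ n0 := fun h => hno s hs.1 (h ▸ hm2'')
    have hy' : y' = y1 := by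
      have hmem : y' ∈ G.neighborFinset v := mnf _ _ hAy'
      rw [hnbr] at hmem
      simp only [Finset.mem_insert, Finset.mem_singleton] at hmem
      rcases hmem with rfl | h | h
      exacts [(hy'n rfl).elim, (g14 h.symm).elim, h]
    rw [hy'] at hnd' hEq'
    exact ⟨b', x', hnd', hEq', hsubE⟩
  have step : ∀ (si sj : Finset (Sym2 V)) (bi xi bj xj : V),
      ([v, a1, bi, xi, y1] : List V).Nodup →
      si = {s(v, a1), s(a1, bi), s(bi, xi), s(xi, y1), s(y1, v)} →
      sj = {s(v, a1), s(a1, bj), s(bj, xj), s(xj, y1), s(y1, v)} →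
      (∀ z ∈ si, z ∈ G.edgeSet) → (∀ z ∈ sj, z ∈ G.edgeSet) → si ≠ sj → bi ≠ bj := by
    intro si sj bi xi bj xj hndi hqi hqj hsubi hsubj hsij
    rintro rfl
    have hndi' := hndi
    simp only [List.nodup_cons, List.mem_cons, List.mem_singleton, List.not_mem_nil,
      List.nodup_nil, not_false_iff, and_true, or_false] at hndi'
    push_neg at hndi'
    obtain ⟨-, -, ⟨-, k24⟩, -⟩ := hndi'
    by_cases hx : xi = xj
    · exact hsij (by rw [hqi, hqj, hx])
    · have Ad1 : G.Adj bi xi := G.mem_edgeSet.mp (hsubi s(bi, xi) (by rw [hqi]; simp))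
      have Ad2 : G.Adj xi y1 := G.mem_edgeSet.mp (hsubi s(xi, y1) (by rw [hqi]; simp))
      have Ad3 : G.Adj xj y1 := G.mem_edgeSet.mp (hsubj s(xj, y1) (by rw [hqj]; simp))
      have Ad4 : G.Adj bi xj := G.mem_edgeSet.mp (hsubj s(bi, xj) (by rw [hqj]; simp))
      exact gsq hg k24 hx Ad1 Ad2 Ad3.symm Ad4.symm
  obtain ⟨B1, X1, hN1, hQ1, hS1⟩ := key2 s1 hs1
  obtain ⟨B2, X2, hN2, hQ2, hS2⟩ := key2 s2 hs2
  obtain ⟨B3, X3, hN3, hQ3, hS3⟩ := key2 s3 hs3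
  have hb12 : B1 ≠ B2 := step s1 s2 B1 X1 B2 X2 hN1 hQ1 hQ2 hS1 hS2 h12
  have hb13 : B1 ≠ B3 := step s1 s3 B1 X1 B3 X3 hN1 hQ1 hQ3 hS1 hS3 h13
  have hb23 : B2 ≠ B3 := step s2 s3 B2 X2 B3 X3 hN2 hQ2 hQ3 hS2 hS3 h23
  have hvB : ∀ (si : Finset (Sym2 V)) (bi xi : V), ([v, a1, bi, xi, y1] : List V).Nodup →
      v ≠ bi := by
    intro si bi xi hndi
    simp only [List.nodup_cons, List.mem_cons, List.mem_singleton, List.not_mem_nil,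
      List.nodup_nil, not_false_iff, and_true, or_false] at hndi
    push_neg at hndi
    exact hndi.1.2.1
  have hsubN : ({v, B1, B2, B3} : Finset V) ⊆ G.neighborFinset a1 := by
    intro z hz
    simp only [Finset.mem_insert, Finset.mem_singleton] at hz
    rcases hz with rfl | h | h | h
    · exact mnf _ _ hA1.symm
    · rw [h]; exact mnf _ _ (G.mem_edgeSet.mp (hS1 s(a1, B1) (by rw [hQ1]; simp)))
    · rw [h]; exact mnf _ _ (G.mem_edgeSet.mp (hS2 s(a1, B2) (by rw [hQ2]; simp)))
    · rw [h]; exact mnf _ _ (G.mem_edgeSet.mp (hS3 s(a1, B3) (by rw [hQ3]; simp)))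
  have hle := Finset.card_le_card hsubN
  rw [card4 (hvB s1 B1 X1 hN1) (hvB s2 B2 X2 hN2) (hvB s3 B3 X3 hN3) hb12 hb13 hb23,
    SimpleGraph.card_neighborFinset_eq_degree, hcubic a1] at hle
  omega

end Aux

/-- In a cubic graph of girth at least 5, no two distinct pentagons share
more than two edges, and consequently for any edge `e` belonging to no pentagon, each
vertex incident to `e` lies in at most two pentagons. -/
theorem pentagons_share_at_most_two_edges {V : Type*} [Fintype V] [DecidableEq V]
    (G : SimpleGraph V) [DecidableRel G.Adj]
    (hcubic : G.IsRegularOfDegree 3) (hgirth : 5 ≤ G.egirth) :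
    (∀ {u v : V} (c₁ : G.Walk u u) (c₂ : G.Walk v v), c₁.IsCycle → c₂.IsCycle →
      c₁.length = 5 → c₂.length = 5 → c₁.edges.toFinset ≠ c₂.edges.toFinset →
      (c₁.edges.toFinset ∩ c₂.edges.toFinset).card ≤ 2) ∧
    (∀ e ∈ G.edgeSet, (∀ s ∈ pentagonEdgeSets G, e ∉ s) →
      ∀ v ∈ e, ({s ∈ pentagonEdgeSets G | ∃ e' ∈ s, v ∈ e'}).ncard ≤ 2) := by
  constructor
  · intro u v c₁ c₂ h1 h2 h3 h4 h5
    exact part1 hgirth c₁ c₂ h1 h2 h3 h4 h5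
  · exact part2 hcubic hgirth
end
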